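/- arXiv:2302.00657 — 2 statements merged into one kernel-verified Lean document; each statement's English description precedes it below -/
import Mathlib

section
/- Let H be a thin spider with partition (S, K, R) such that the subgraph H[R] of H induced by R is P4-sparse, let u ∈ R, and let uw be a tail added to H (w ∉ V(H)). Let f' be the minimum number of fill edges (excluding uw) in a P4-sparse completion of the graph H[R]+uw. Then the minimum number of fill edges (excluding the tail uw) in a P4-sparse completion of H+uw equals min{ |R \ N_H[u]| , |K| + f' }, where N_H[u] is the closed neighborhood of u in H. -/
open SimpleGraph Set

variable {α : Type*}

/-- The graph `G + uw` obtained from `G` by adding the tail edge `uw`. -/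
def addTail (G : SimpleGraph α) (u w : α) : SimpleGraph α :=
  G ⊔ SimpleGraph.fromEdgeSet {s(u, w)}

/-- The number of fill edges of a completion `G'` of the base graph `base`:
the edges of `G'` that are not edges of `base`. -/
noncomputable def fillCount (base G' : SimpleGraph α) : ℕ :=
  (G'.edgeSet \ base.edgeSet).ncard

/-- `S` is an independent set of the graph `G`. -/
def IsIndepSetOn (G : SimpleGraph α) (S : Set α) : Prop :=
  ∀ x ∈ S, ∀ y ∈ S, ¬ G.Adj x y

/-- A graph is split if its vertex set can be partitioned into a clique and an
independent set. -/
def IsSplitGraph (G : SimpleGraph α) : Prop :=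
  ∃ K S : Set α, K ∪ S = Set.univ ∧ Disjoint K S ∧ G.IsClique K ∧ IsIndepSetOn G S

/-- `a b c d` (in this order) induce a chordless path `P₄` in `G`. -/
def IsInducedP4 (G : SimpleGraph α) (a b c d : α) : Prop :=
  a ≠ b ∧ a ≠ c ∧ a ≠ d ∧ b ≠ c ∧ b ≠ d ∧ c ≠ d ∧
  G.Adj a b ∧ G.Adj b c ∧ G.Adj c d ∧ ¬ G.Adj a c ∧ ¬ G.Adj a d ∧ ¬ G.Adj b d

/-- `a b c d` (in this order) induce a chordless cycle `C₄` in `G`. -/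
def IsInducedC4 (G : SimpleGraph α) (a b c d : α) : Prop :=
  a ≠ b ∧ a ≠ c ∧ a ≠ d ∧ b ≠ c ∧ b ≠ d ∧ c ≠ d ∧
  G.Adj a b ∧ G.Adj b c ∧ G.Adj c d ∧ G.Adj d a ∧ ¬ G.Adj a c ∧ ¬ G.Adj b d

/-- `a b c d` induce a `2K₂` (two independent edges `ab` and `cd`) in `G`. -/
def IsInduced2K2 (G : SimpleGraph α) (a b c d : α) : Prop :=
  a ≠ b ∧ a ≠ c ∧ a ≠ d ∧ b ≠ c ∧ b ≠ d ∧ c ≠ d ∧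
  G.Adj a b ∧ G.Adj c d ∧ ¬ G.Adj a c ∧ ¬ G.Adj a d ∧ ¬ G.Adj b c ∧ ¬ G.Adj b d

/-- A graph is threshold iff it has no induced `C₄`, `P₄`, or `2K₂`. -/
def IsThresholdGraph (G : SimpleGraph α) : Prop :=
  (∀ a b c d, ¬ IsInducedC4 G a b c d) ∧ (∀ a b c d, ¬ IsInducedP4 G a b c d) ∧
  (∀ a b c d, ¬ IsInduced2K2 G a b c d)

/-- A graph is quasi-threshold iff it has no induced `C₄` or `P₄`. -/
def IsQuasiThresholdGraph (G : SimpleGraph α) : Prop :=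
  (∀ a b c d, ¬ IsInducedC4 G a b c d) ∧ (∀ a b c d, ¬ IsInducedP4 G a b c d)

/-- `t` is the vertex set of an induced `P₄` of `G`. -/
def IsP4SetOn (G : SimpleGraph α) (t : Set α) : Prop :=
  ∃ a b c d : α, t = {a, b, c, d} ∧ IsInducedP4 G a b c d

/-- A graph is `P₄`-sparse iff every set of five vertices induces at most one `P₄`. -/
def IsP4Sparse (G : SimpleGraph α) : Prop :=
  ∀ s : Set α, s.ncard = 5 →
    ∀ t₁ ⊆ s, ∀ t₂ ⊆ s, IsP4SetOn G t₁ → IsP4SetOn G t₂ → t₁ = t₂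

/-- The subgraph of `H` induced by the set `R` (as a graph on the same vertex type,
all vertices outside `R` being isolated). -/
def restrictSet (H : SimpleGraph α) (R : Set α) : SimpleGraph α where
  Adj x y := H.Adj x y ∧ x ∈ R ∧ y ∈ R
  symm := ⟨fun x y ⟨h, hx, hy⟩ => ⟨h.symm, hy, hx⟩⟩
  loopless := ⟨fun x h => H.irrefl h.1⟩

/-- `(S, K, R)` is a thin-spider partition of (the vertex set of) `H`. -/
def ThinSpider (H : SimpleGraph α) (S K R : Set α) : Prop :=
  IsIndepSetOn H S ∧ H.IsClique K ∧ S.ncard = K.ncard ∧ 2 ≤ K.ncard ∧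
  Disjoint S K ∧ Disjoint S R ∧ Disjoint K R ∧
  (∀ r ∈ R, ∀ k ∈ K, H.Adj r k) ∧ (∀ r ∈ R, ∀ s ∈ S, ¬ H.Adj r s) ∧
  ∃ f : α → α, Set.BijOn f S K ∧ ∀ s ∈ S, ∀ k ∈ K, (H.Adj s k ↔ k = f s)

/-- `(S, K, R)` is a thick-spider partition of (the vertex set of) `H`;
thick spiders are assumed to have `|K| ≥ 3`. -/
def ThickSpider (H : SimpleGraph α) (S K R : Set α) : Prop :=
  IsIndepSetOn H S ∧ H.IsClique K ∧ S.ncard = K.ncard ∧ 3 ≤ K.ncard ∧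
  Disjoint S K ∧ Disjoint S R ∧ Disjoint K R ∧
  (∀ r ∈ R, ∀ k ∈ K, H.Adj r k) ∧ (∀ r ∈ R, ∀ s ∈ S, ¬ H.Adj r s) ∧
  ∃ f : α → α, Set.BijOn f S K ∧ ∀ s ∈ S, ∀ k ∈ K, (H.Adj s k ↔ k ≠ f s)

/-- The set of possible numbers of fill edges of completions of `base` into the
graph class `C`. -/
def completionFills (C : SimpleGraph α → Prop) (base : SimpleGraph α) : Set ℕ :=
  {n | ∃ G' : SimpleGraph α, base ≤ G' ∧ C G' ∧ fillCount base G' = n}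
section Helpers

variable {α : Type*}

lemma ncard4 [Fintype α] {a b c d : α} (hab : a ≠ b) (hac : a ≠ c) (had : a ≠ d)
    (hbc : b ≠ c) (hbd : b ≠ d) (hcd : c ≠ d) : ({a, b, c, d} : Set α).ncard = 4 := by
  rw [Set.ncard_insert_of_notMem (by simp [hab, hac, had]) (Set.toFinite _),
      Set.ncard_insert_of_notMem (by simp [hbc, hbd]) (Set.toFinite _),
      Set.ncard_pair hcd]

lemma ncard5 [Fintype α] {a b c d e : α} (hab : a ≠ b) (hac : a ≠ c) (had : a ≠ d)
    (hae : a ≠ e) (hbc : b ≠ c) (hbd : b ≠ d) (hbe : b ≠ e) (hcd : c ≠ d)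
    (hce : c ≠ e) (hde : d ≠ e) : ({a, b, c, d, e} : Set α).ncard = 5 := by
  rw [Set.ncard_insert_of_notMem (by simp [hab, hac, had, hae]) (Set.toFinite _),
      ncard4 hbc hbd hbe hcd hce hde]

lemma restrict_adj {H : SimpleGraph α} {R : Set α} {x y : α} :
    (restrictSet H R).Adj x y ↔ H.Adj x y ∧ x ∈ R ∧ y ∈ R := Iff.rfl

lemma isInducedP4_of_restrict {G : SimpleGraph α} {A : Set α} {a b c d : α}
    (h : IsInducedP4 (restrictSet G A) a b c d) : IsInducedP4 G a b c d := by
  obtain ⟨h1, h2, h3, h4, h5, h6, hab, hbc, hcd, hac, had, hbd⟩ := h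
  exact ⟨h1, h2, h3, h4, h5, h6, hab.1, hbc.1, hcd.1,
    fun h' => hac ⟨h', hab.2.1, hbc.2.2⟩, fun h' => had ⟨h', hab.2.1, hcd.2.2⟩,
    fun h' => hbd ⟨h', hbc.2.1, hcd.2.2⟩⟩

lemma isInducedP4_restrict_of {G : SimpleGraph α} {A : Set α} {a b c d : α}
    (h : IsInducedP4 G a b c d) (ha : a ∈ A) (hb : b ∈ A) (hc : c ∈ A) (hd : d ∈ A) :
    IsInducedP4 (restrictSet G A) a b c d := by
  obtain ⟨h1, h2, h3, h4, h5, h6, hab, hbc, hcd, hac, had, hbd⟩ := h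
  exact ⟨h1, h2, h3, h4, h5, h6, ⟨hab, ha, hb⟩, ⟨hbc, hb, hc⟩, ⟨hcd, hc, hd⟩,
    fun h' => hac h'.1, fun h' => had h'.1, fun h' => hbd h'.1⟩

lemma isP4Sparse_restrict {G : SimpleGraph α} (hG : IsP4Sparse G) (A : Set α) :
    IsP4Sparse (restrictSet G A) := by
  intro s hs t1 ht1 t2 ht2 h1 h2
  obtain ⟨a, b, c, d, rfl, hp⟩ := h1
  obtain ⟨a', b', c', d', rfl, hp'⟩ := h2
  exact hG s hs _ ht1 _ ht2 ⟨a, b, c, d, rfl, isInducedP4_of_restrict hp⟩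
    ⟨a', b', c', d', rfl, isInducedP4_of_restrict hp'⟩

lemma isInducedP4_rev {G : SimpleGraph α} {a b c d : α} (h : IsInducedP4 G a b c d) :
    IsInducedP4 G d c b a := by
  obtain ⟨h1, h2, h3, h4, h5, h6, hab, hbc, hcd, hac, had, hbd⟩ := h
  exact ⟨h6.symm, h5.symm, h3.symm, h4.symm, h2.symm, h1.symm, hcd.symm, hbc.symm, hab.symm,
    fun h' => hbd h'.symm, fun h' => had h'.symm, fun h' => hac h'.symm⟩

/-- add a "star" from center u to the set A (minus u itself) -/
def star' (u : α) (A : Set α) : SimpleGraph α where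
  Adj x y := (x = u ∧ y ∈ A ∧ y ≠ u) ∨ (y = u ∧ x ∈ A ∧ x ≠ u)
  symm := ⟨fun x y h => by tauto⟩
  loopless := ⟨fun x h => by rcases h with ⟨rfl, _, h⟩ | ⟨rfl, _, h⟩ <;> exact h rfl⟩

lemma star'_adj {u : α} {A : Set α} {x y : α} :
    (star' u A).Adj x y ↔ (x = u ∧ y ∈ A ∧ y ≠ u) ∨ (y = u ∧ x ∈ A ∧ x ≠ u) := Iff.rfl

lemma addTail_adj {G : SimpleGraph α} {u w x y : α} :
    (addTail G u w).Adj x y ↔ G.Adj x y ∨ (s(x, y) = s(u, w) ∧ x ≠ y) := by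
  simp [addTail, SimpleGraph.fromEdgeSet_adj]

end Helpers
section Spider

variable {α : Type*}

variable {G : SimpleGraph α} {S K R : Set α} {f : α → α}

/-- classification of induced P4s in a thin spider -/
lemma spider_p4_classify
    (hcov : S ∪ K ∪ R = Set.univ)
    (hS : IsIndepSetOn G S) (hK : G.IsClique K)
    (hRK : ∀ r ∈ R, ∀ k ∈ K, G.Adj r k)
    (hRS : ∀ r ∈ R, ∀ s ∈ S, ¬ G.Adj r s)
    (hmap : Set.MapsTo f S K)
    (hiff : ∀ s ∈ S, ∀ k ∈ K, (G.Adj s k ↔ k = f s))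
    {a b c d : α} (h : IsInducedP4 G a b c d) :
    (a ∈ R ∧ b ∈ R ∧ c ∈ R ∧ d ∈ R) ∨ (a ∈ S ∧ d ∈ S ∧ b = f a ∧ c = f d) := by
  have tri : ∀ v : α, v ∈ S ∨ v ∈ K ∨ v ∈ R := by
    intro v
    have : v ∈ S ∪ K ∪ R := hcov.symm ▸ Set.mem_univ v
    simpa [Set.mem_union, or_assoc] using this
  -- a vertex of S has at most one neighbour, namely its image
  have sdeg : ∀ s ∈ S, ∀ x, G.Adj s x → x = f s := by
    intro s hs x hadj
    rcases tri x with hx | hx | hx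
    · exact absurd hadj (hS s hs x hx)
    · exact (hiff s hs x hx).1 hadj
    · exact absurd hadj.symm (hRS x hx s hs)
  -- if the first vertex of an induced P4 is in S, then the structure is forced
  have endS : ∀ a b c d : α, IsInducedP4 G a b c d → a ∈ S →
      a ∈ S ∧ d ∈ S ∧ b = f a ∧ c = f d := by
    intro a b c d h ha
    obtain ⟨hab, hac, had, hbc, hbd, hcd, eab, ebc, ecd, nac, nad, nbd⟩ := h
    have hbfa : b = f a := sdeg a ha b eab
    have hbK : b ∈ K := hbfa ▸ hmap ha
    have hdS : d ∈ S := by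
      rcases tri d with hd | hd | hd
      · exact hd
      · exact absurd (hK hbK hd hbd) nbd
      · exact absurd (hRK d hd b hbK).symm nbd
    have hcfd : c = f d := sdeg d hdS c ecd.symm
    exact ⟨ha, hdS, hbfa, hcfd⟩
  obtain ⟨hab, hac, had, hbc, hbd, hcd, eab, ebc, ecd, nac, nad, nbd⟩ := h
  -- b, c are not in S
  have hbS : b ∉ S := fun hb =>
    hac ((sdeg b hb a eab.symm).trans (sdeg b hb c ebc).symm)
  have hcS : c ∉ S := fun hc =>
    hbd ((sdeg c hc b ebc.symm).trans (sdeg c hc d ecd).symm)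
  rcases tri a with ha | ha | ha
  · exact Or.inr (endS a b c d ⟨hab, hac, had, hbc, hbd, hcd, eab, ebc, ecd, nac, nad, nbd⟩ ha)
  all_goals rcases tri d with hd | hd | hd
  · -- a ∈ K, d ∈ S : use the reversed P4
    obtain ⟨h1, h2, h3, h4⟩ := endS d c b a
      (isInducedP4_rev ⟨hab, hac, had, hbc, hbd, hcd, eab, ebc, ecd, nac, nad, nbd⟩) hd
    exact Or.inr ⟨h2, h1, h4, h3⟩
  · -- a ∈ K, d ∈ K : impossible (c adjacent to a)
    exfalso
    rcases tri c with hc | hc | hc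
    · exact hcS hc
    · exact nac (hK ha hc hac)
    · exact nac (hRK c hc a ha).symm
  · -- a ∈ K, d ∈ R : c is adjacent to a, impossible
    exfalso
    rcases tri c with hc | hc | hc
    · exact hcS hc
    · exact nac (hK ha hc hac)
    · exact nac (hRK c hc a ha).symm
  · -- a ∈ R, d ∈ S
    obtain ⟨h1, h2, h3, h4⟩ := endS d c b a
      (isInducedP4_rev ⟨hab, hac, had, hbc, hbd, hcd, eab, ebc, ecd, nac, nad, nbd⟩) hd
    exact Or.inr ⟨h2, h1, h4, h3⟩
  · -- a ∈ R, d ∈ K : b adjacent to d, impossible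
    exfalso
    rcases tri b with hb | hb | hb
    · exact hbS hb
    · exact nbd (hK hb hd hbd)
    · exact nbd (hRK b hb d hd)
  · -- a ∈ R, d ∈ R : show b, c ∈ R
    have hcR : c ∈ R := by
      rcases tri c with hc | hc | hc
      · exact absurd hc hcS
      · exact absurd (hRK a ha c hc) nac
      · exact hc
    have hbR : b ∈ R := by
      rcases tri b with hb | hb | hb
      · exact absurd hb hbS
      · exact absurd (hRK d hd b hb).symm nbd
      · exact hb
    exact Or.inl ⟨ha, hbR, hcR, hd⟩

end Spider
section SpiderSparse

variable {α : Type*} {G : SimpleGraph α} {S K R : Set α} {f : α → α}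

lemma spider_sparse [Fintype α]
    (hcov : S ∪ K ∪ R = Set.univ)
    (hSK : Disjoint S K) (hSR : Disjoint S R) (hKR : Disjoint K R)
    (hS : IsIndepSetOn G S) (hK : G.IsClique K)
    (hRK : ∀ r ∈ R, ∀ k ∈ K, G.Adj r k)
    (hRS : ∀ r ∈ R, ∀ s ∈ S, ¬ G.Adj r s)
    (hmap : Set.MapsTo f S K) (hinj : Set.InjOn f S)
    (hiff : ∀ s ∈ S, ∀ k ∈ K, (G.Adj s k ↔ k = f s))
    (hhead : IsP4Sparse (restrictSet G R)) : IsP4Sparse G := by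
  intro σ hσ t1 ht1 t2 ht2 h1 h2
  obtain ⟨a1, b1, c1, d1, rfl, hp1⟩ := h1
  obtain ⟨a2, b2, c2, d2, rfl, hp2⟩ := h2
  have mixed : ∀ x1 y1 z1 u1 x2 y2 z2 u2 : α,
      ({x1, y1, z1, u1} : Set α) ⊆ σ → ({x2, y2, z2, u2} : Set α) ⊆ σ →
      x1 ≠ y1 → IsInducedP4 G x2 y2 z2 u2 →
      (x1 ∈ R ∧ y1 ∈ R ∧ z1 ∈ R ∧ u1 ∈ R) → (x2 ∈ S ∧ u2 ∈ S ∧ y2 = f x2 ∧ z2 = f u2) →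
      False := by
    intro x1 y1 z1 u1 x2 y2 z2 u2 hs1 hs2 hne hq hRmem hAmem
    obtain ⟨hx1, hy1, -, -⟩ := hRmem
    obtain ⟨hx2, hu2, hy2, hz2⟩ := hAmem
    obtain ⟨q1, q2, q3, q4, q5, q6, -⟩ := hq
    have hy2K : y2 ∈ K := hy2 ▸ hmap hx2
    have hz2K : z2 ∈ K := hz2 ▸ hmap hu2
    have h4 : ({x2, y2, z2, u2} : Set α).ncard = 4 := ncard4 q1 q2 q3 q4 q5 q6
    have hdiffcard : (σ \ ({x2, y2, z2, u2} : Set α)).ncard = 1 := by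
      rw [Set.ncard_diff hs2 (Set.toFinite _), hσ, h4]
    have hnotmem : ∀ v ∈ R, v ∉ ({x2, y2, z2, u2} : Set α) := by
      intro v hv hmem
      rcases hmem with rfl | rfl | rfl | rfl
      · exact hSR.ne_of_mem hx2 hv rfl
      · exact hKR.ne_of_mem hy2K hv rfl
      · exact hKR.ne_of_mem hz2K hv rfl
      · exact hSR.ne_of_mem hu2 hv rfl
    have hsub : ({x1, y1} : Set α) ⊆ σ \ ({x2, y2, z2, u2} : Set α) := by
      rintro z (rfl | rfl)
      · exact ⟨hs1 (by simp), hnotmem _ hx1⟩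
      · exact ⟨hs1 (by simp), hnotmem _ hy1⟩
    have hle := Set.ncard_le_ncard hsub (Set.toFinite _)
    rw [Set.ncard_pair hne, hdiffcard] at hle
    omega
  rcases spider_p4_classify hcov hS hK hRK hRS hmap hiff hp1 with hB1 | hA1 <;>
    rcases spider_p4_classify hcov hS hK hRK hRS hmap hiff hp2 with hB2 | hA2
  · -- both inside R : use sparseness of the head
    exact hhead σ hσ _ ht1 _ ht2
      ⟨a1, b1, c1, d1, rfl, isInducedP4_restrict_of hp1 hB1.1 hB1.2.1 hB1.2.2.1 hB1.2.2.2⟩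
      ⟨a2, b2, c2, d2, rfl, isInducedP4_restrict_of hp2 hB2.1 hB2.2.1 hB2.2.2.1 hB2.2.2.2⟩
  · exact absurd (mixed a1 b1 c1 d1 a2 b2 c2 d2 ht1 ht2 hp1.1 hp2 hB1 hA2) not_false
  · exact absurd (mixed a2 b2 c2 d2 a1 b1 c1 d1 ht2 ht1 hp2.1 hp1 hB2 hA1) not_false
  · -- both spider-type P4s
    obtain ⟨ha1, hd1, hb1, hc1⟩ := hA1
    obtain ⟨ha2, hd2, hb2, hc2⟩ := hA2
    obtain ⟨p1, p2, p3, p4, p5, p6, -⟩ := hp1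
    obtain ⟨q1, q2, q3, q4, q5, q6, -⟩ := hp2
    have hb1K : b1 ∈ K := hb1 ▸ hmap ha1
    have hc1K : c1 ∈ K := hc1 ▸ hmap hd1
    have hb2K : b2 ∈ K := hb2 ▸ hmap ha2
    have hc2K : c2 ∈ K := hc2 ▸ hmap hd2
    -- if both S-endpoints of t1 lie in t2, we are done
    have pairEq : a1 ∈ ({a2, b2, c2, d2} : Set α) → d1 ∈ ({a2, b2, c2, d2} : Set α) →
        ({a1, b1, c1, d1} : Set α) = ({a2, b2, c2, d2} : Set α) := by
      intro hha hhd
      have ha' : a1 = a2 ∨ a1 = d2 := by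
        rcases hha with rfl | rfl | rfl | rfl
        · exact Or.inl rfl
        · exact absurd rfl (hSK.ne_of_mem ha1 hb2K)
        · exact absurd rfl (hSK.ne_of_mem ha1 hc2K)
        · exact Or.inr rfl
      have hd' : d1 = a2 ∨ d1 = d2 := by
        rcases hhd with rfl | rfl | rfl | rfl
        · exact Or.inl rfl
        · exact absurd rfl (hSK.ne_of_mem hd1 hb2K)
        · exact absurd rfl (hSK.ne_of_mem hd1 hc2K)
        · exact Or.inr rfl
      rcases ha' with ha' | ha' <;> rcases hd' with hd' | hd'
      · exact absurd (ha'.trans hd'.symm) p3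
      · have eb : b1 = b2 := by rw [hb1, hb2, ha']
        have ec : c1 = c2 := by rw [hc1, hc2, hd']
        rw [ha', hd', eb, ec]
      · have eb : b1 = c2 := by rw [hb1, hc2, ha']
        have ec : c1 = b2 := by rw [hc1, hb2, hd']
        rw [ha', hd', eb, ec]
        ext z; simp; tauto
      · exact absurd (ha'.trans hd'.symm) p3
    -- the intersection of t1 and t2 has at least 3 elements
    have hinter : 3 ≤ (({a1, b1, c1, d1} : Set α) ∩ ({a2, b2, c2, d2} : Set α)).ncard := by
      have k1 : ({a1, b1, c1, d1} : Set α).ncard = 4 := ncard4 p1 p2 p3 p4 p5 p6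
      have k2 : ({a2, b2, c2, d2} : Set α).ncard = 4 := ncard4 q1 q2 q3 q4 q5 q6
      have kun : (({a1, b1, c1, d1} : Set α) ∪ ({a2, b2, c2, d2} : Set α)).ncard ≤ 5 := by
        rw [← hσ]
        exact Set.ncard_le_ncard (Set.union_subset ht1 ht2) (Set.toFinite _)
      have := Set.ncard_inter_add_ncard_union ({a1, b1, c1, d1} : Set α)
        ({a2, b2, c2, d2} : Set α) (Set.toFinite _) (Set.toFinite _)
      omega
    -- main deduction once b1 and c1 both lie in t2
    have main : b1 ∈ ({a2, b2, c2, d2} : Set α) → c1 ∈ ({a2, b2, c2, d2} : Set α) →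
        ({a1, b1, c1, d1} : Set α) = ({a2, b2, c2, d2} : Set α) := by
      intro hhb hhc
      have hb' : b1 = b2 ∨ b1 = c2 := by
        rcases hhb with rfl | rfl | rfl | rfl
        · exact absurd rfl (Ne.symm (hSK.ne_of_mem ha2 hb1K))
        · exact Or.inl rfl
        · exact Or.inr rfl
        · exact absurd rfl (Ne.symm (hSK.ne_of_mem hd2 hb1K))
      have hc' : c1 = b2 ∨ c1 = c2 := by
        rcases hhc with rfl | rfl | rfl | rfl
        · exact absurd rfl (Ne.symm (hSK.ne_of_mem ha2 hc1K))
        · exact Or.inl rfl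
        · exact Or.inr rfl
        · exact absurd rfl (Ne.symm (hSK.ne_of_mem hd2 hc1K))
      rcases hb' with hb' | hb' <;> rcases hc' with hc' | hc'
      · exact absurd (hb'.trans hc'.symm) p4
      · have e1 : a1 = a2 := hinj ha1 ha2 (by rw [← hb1, ← hb2, hb'])
        have e2 : d1 = d2 := hinj hd1 hd2 (by rw [← hc1, ← hc2, hc'])
        rw [e1, e2, hb', hc']
      · have e1 : a1 = d2 := hinj ha1 hd2 (by rw [← hb1, ← hc2, hb'])
        have e2 : d1 = a2 := hinj hd1 ha2 (by rw [← hc1, ← hb2, hc'])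
        rw [e1, e2, hb', hc']
        ext z; simp; tauto
      · exact absurd (hb'.trans hc'.symm) p4
    by_cases hhb : b1 ∈ ({a2, b2, c2, d2} : Set α)
    · by_cases hhc : c1 ∈ ({a2, b2, c2, d2} : Set α)
      · exact main hhb hhc
      · -- c1 ∉ t2 : the intersection is exactly {a1, b1, d1}
        have hsub : (({a1, b1, c1, d1} : Set α) ∩ ({a2, b2, c2, d2} : Set α)) ⊆
            ({a1, b1, d1} : Set α) := by
          rintro z ⟨hz1, hz2⟩
          rcases hz1 with rfl | rfl | rfl | rfl
          · simp
          · simp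
          · exact absurd hz2 hhc
          · simp
        have hcard3 : ({a1, b1, d1} : Set α).ncard ≤ 3 := by
          calc ({a1, b1, d1} : Set α).ncard ≤ ({b1, d1} : Set α).ncard + 1 :=
                Set.ncard_insert_le _ _
            _ ≤ 3 := by rw [Set.ncard_pair p5]
        have heq := Set.eq_of_subset_of_ncard_le hsub (by omega) (Set.toFinite _)
        have hamem : a1 ∈ ({a2, b2, c2, d2} : Set α) := by
          have : a1 ∈ (({a1, b1, c1, d1} : Set α) ∩ ({a2, b2, c2, d2} : Set α)) := by
            rw [heq]; simp
          exact this.2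
        have hdmem : d1 ∈ ({a2, b2, c2, d2} : Set α) := by
          have : d1 ∈ (({a1, b1, c1, d1} : Set α) ∩ ({a2, b2, c2, d2} : Set α)) := by
            rw [heq]; simp
          exact this.2
        exact pairEq hamem hdmem
    · -- b1 ∉ t2 : the intersection is exactly {a1, c1, d1}
      have hsub : (({a1, b1, c1, d1} : Set α) ∩ ({a2, b2, c2, d2} : Set α)) ⊆
          ({a1, c1, d1} : Set α) := by
        rintro z ⟨hz1, hz2⟩
        rcases hz1 with rfl | rfl | rfl | rfl
        · simp
        · exact absurd hz2 hhb
        · simp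
        · simp
      have hcard3 : ({a1, c1, d1} : Set α).ncard ≤ 3 := by
        calc ({a1, c1, d1} : Set α).ncard ≤ ({c1, d1} : Set α).ncard + 1 :=
              Set.ncard_insert_le _ _
          _ ≤ 3 := by rw [Set.ncard_pair p6]
      have heq := Set.eq_of_subset_of_ncard_le hsub (by omega) (Set.toFinite _)
      have hamem : a1 ∈ ({a2, b2, c2, d2} : Set α) := by
        have : a1 ∈ (({a1, b1, c1, d1} : Set α) ∩ ({a2, b2, c2, d2} : Set α)) := by
          rw [heq]; simp
        exact this.2
      have hdmem : d1 ∈ ({a2, b2, c2, d2} : Set α) := by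
        have : d1 ∈ (({a1, b1, c1, d1} : Set α) ∩ ({a2, b2, c2, d2} : Set α)) := by
          rw [heq]; simp
        exact this.2
      exact pairEq hamem hdmem

end SpiderSparse
/-- tail at `u ∈ R` of a thin spider with `H[R]` P₄-sparse, where `f'`
is the minimum number of fill edges of a P₄-sparse completion of `H[R]+uw`. -/
theorem thinSpider_tail_R [Fintype α]
    (H : SimpleGraph α) (u w : α) (S K R : Set α)
    (hspider : ThinSpider H S K R)
    (hcover : S ∪ K ∪ R = {w}ᶜ)
    (hw : ∀ x, ¬ H.Adj w x)
    (hRsparse : IsP4Sparse (restrictSet H R)) (hu : u ∈ R)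
    (f' : ℕ)
    (hf' : IsLeast {n | ∃ G'' : SimpleGraph α,
        addTail (restrictSet H R) u w ≤ G'' ∧
        (∀ x y, G''.Adj x y → x ∈ R ∪ {w} ∧ y ∈ R ∪ {w}) ∧
        IsP4Sparse G'' ∧ fillCount (addTail (restrictSet H R) u w) G'' = n} f') :
    IsLeast (completionFills IsP4Sparse (addTail H u w))
      (min (R \ (H.neighborSet u ∪ {u})).ncard (K.ncard + f')) := by
  obtain ⟨hSind, hKcl, hcard, hK2, hSK, hSR, hKR, hRK, hRS, f, hfbij, hfiff⟩ := hspider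
  have hne_w : ∀ v, v ∈ S ∪ K ∪ R → v ≠ w := by
    intro v hv
    rw [hcover] at hv
    simpa using hv
  have hwS : w ∉ S := fun h => hne_w w (Or.inl (Or.inl h)) rfl
  have hwK : w ∉ K := fun h => hne_w w (Or.inl (Or.inr h)) rfl
  have hwR : w ∉ R := fun h => hne_w w (Or.inr h) rfl
  have tri : ∀ v, v ≠ w → v ∈ S ∨ v ∈ K ∨ v ∈ R := by
    intro v hv
    have : v ∈ S ∪ K ∪ R := by rw [hcover]; simpa using hv
    simpa [Set.mem_union, or_assoc] using this
  have huS : u ∉ S := fun h => Set.disjoint_left.1 hSR h hu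
  have huK : u ∉ K := fun h => Set.disjoint_left.1 hKR h hu
  have huw : u ≠ w := hne_w u (Or.inr hu)
  have hbase_uw : (addTail H u w).Adj u w := by
    rw [addTail_adj]; exact Or.inr ⟨rfl, huw⟩
  constructor
  · -- membership : construct an optimal completion
    have mem1 : ∃ G1 : SimpleGraph α, addTail H u w ≤ G1 ∧ IsP4Sparse G1 ∧
        fillCount (addTail H u w) G1 = (R \ (H.neighborSet u ∪ {u})).ncard := by
      classical
      have hnuSw : u ∉ S ∪ {w} := by
        rintro (h | h)
        · exact huS h
        · exact huw (Set.mem_singleton_iff.1 h)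
      refine ⟨H ⊔ star' u (R ∪ {w}), ?_, ?_, ?_⟩
      · -- addTail H u w ≤ G1
        intro x y hxy
        rw [addTail_adj] at hxy
        rcases hxy with hH | ⟨he, hne⟩
        · exact Or.inl hH
        · rcases Sym2.eq_iff.1 he with ⟨rfl, rfl⟩ | ⟨rfl, rfl⟩
          · exact Or.inr (Or.inl ⟨rfl, Or.inr rfl, Ne.symm hne⟩)
          · exact Or.inr (Or.inr ⟨rfl, Or.inr rfl, hne⟩)
      · -- P4-sparse via the spider lemma
        apply spider_sparse (S := S ∪ {w}) (K := K ∪ {u}) (R := R \ {u})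
          (f := Function.update f w u)
        · -- cover
          ext v
          simp only [Set.mem_union, Set.mem_univ, iff_true, Set.mem_diff,
            Set.mem_singleton_iff]
          by_cases hv : v = w
          · exact Or.inl (Or.inl (Or.inr hv))
          · rcases tri v hv with h | h | h
            · exact Or.inl (Or.inl (Or.inl h))
            · exact Or.inl (Or.inr (Or.inl h))
            · by_cases hvu : v = u
              · exact Or.inl (Or.inr (Or.inr hvu))
              · exact Or.inr ⟨h, hvu⟩
        · rw [Set.disjoint_left]
          rintro v (hv | hv) (hv' | hv')
          · exact Set.disjoint_left.1 hSK hv hv'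
          · exact huS ((Set.mem_singleton_iff.1 hv') ▸ hv)
          · exact hwK ((Set.mem_singleton_iff.1 hv) ▸ hv')
          · exact huw ((Set.mem_singleton_iff.1 hv') ▸ (Set.mem_singleton_iff.1 hv))
        · rw [Set.disjoint_left]
          rintro v (hv | hv) ⟨hv', -⟩
          · exact Set.disjoint_left.1 hSR hv hv'
          · exact hwR ((Set.mem_singleton_iff.1 hv) ▸ hv')
        · rw [Set.disjoint_left]
          rintro v (hv | hv) ⟨hv', hv''⟩
          · exact Set.disjoint_left.1 hKR hv hv'
          · exact hv'' (Set.mem_singleton_iff.1 hv)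
        · -- independence of S ∪ {w}
          intro x hx y hy hadj
          rcases hadj with h | h
          · rcases hx with hx | hx
            · rcases hy with hy | hy
              · exact hSind x hx y hy h
              · have hyw : y = w := Set.mem_singleton_iff.1 hy
                rw [hyw] at h; exact hw x h.symm
            · have hxw : x = w := Set.mem_singleton_iff.1 hx
              rw [hxw] at h; exact hw y h
          · rcases h with ⟨h1, -, -⟩ | ⟨h1, -, -⟩
            · exact hnuSw (h1 ▸ hx)
            · exact hnuSw (h1 ▸ hy)
        · -- clique on K ∪ {u}
          intro x hx y hy hne
          rcases hx with hx | hx <;> rcases hy with hy | hy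
          · exact Or.inl (hKcl hx hy hne)
          · have hyu : y = u := Set.mem_singleton_iff.1 hy
            rw [hyu]; exact Or.inl (hRK u hu x hx).symm
          · have hxu : x = u := Set.mem_singleton_iff.1 hx
            rw [hxu]; exact Or.inl (hRK u hu y hy)
          · exact absurd ((Set.mem_singleton_iff.1 hx).trans
              (Set.mem_singleton_iff.1 hy).symm) hne
        · -- R' adjacent to all K'
          intro r hr k hk
          rcases hk with hk | hk
          · exact Or.inl (hRK r hr.1 k hk)
          · have hku : k = u := Set.mem_singleton_iff.1 hk
            rw [hku]
            exact Or.inr (Or.inr ⟨rfl, Or.inl hr.1, fun h => hr.2 (Set.mem_singleton_iff.2 h)⟩)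
        · -- R' not adjacent to S'
          intro r hr s hs hadj
          rcases hadj with h | h
          · rcases hs with hs | hs
            · exact hRS r hr.1 s hs h
            · have hsw : s = w := Set.mem_singleton_iff.1 hs
              rw [hsw] at h; exact hw r h.symm
          · rcases h with ⟨h1, -, -⟩ | ⟨h1, -, -⟩
            · exact hr.2 (Set.mem_singleton_iff.2 h1)
            · exact hnuSw (h1 ▸ hs)
        · -- MapsTo
          rintro v (hv | hv)
          · rw [Function.update_of_ne (hne_w v (Or.inl (Or.inl hv)))]
            exact Or.inl (hfbij.mapsTo hv)
          · have hvw : v = w := Set.mem_singleton_iff.1 hv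
            rw [hvw, Function.update_self]
            exact Or.inr rfl
        · -- InjOn
          rintro x (hx | hx) y (hy | hy) he
          · rw [Function.update_of_ne (hne_w x (Or.inl (Or.inl hx))),
              Function.update_of_ne (hne_w y (Or.inl (Or.inl hy)))] at he
            exact hfbij.injOn hx hy he
          · have hyw : y = w := Set.mem_singleton_iff.1 hy
            rw [hyw, Function.update_of_ne (hne_w x (Or.inl (Or.inl hx))),
              Function.update_self] at he
            exact absurd (he ▸ hfbij.mapsTo hx) huK
          · have hxw : x = w := Set.mem_singleton_iff.1 hx
            rw [hxw, Function.update_self,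
              Function.update_of_ne (hne_w y (Or.inl (Or.inl hy)))] at he
            exact absurd (he ▸ hfbij.mapsTo hy) huK
          · exact (Set.mem_singleton_iff.1 hx).trans (Set.mem_singleton_iff.1 hy).symm
        · -- adjacency iff for the new spider
          rintro s (hs | hs) k (hk | hk)
          · rw [Function.update_of_ne (hne_w s (Or.inl (Or.inl hs)))]
            constructor
            · rintro (h | h)
              · exact (hfiff s hs k hk).1 h
              · rcases h with ⟨h1, -, -⟩ | ⟨h1, -, -⟩
                · exact absurd (h1 ▸ hs) huS
                · exact absurd (h1 ▸ hk) huK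
            · intro h
              exact Or.inl ((hfiff s hs k hk).2 h)
          · have hku : k = u := Set.mem_singleton_iff.1 hk
            rw [hku, Function.update_of_ne (hne_w s (Or.inl (Or.inl hs)))]
            constructor
            · rintro (h | h)
              · exact absurd h.symm (hRS u hu s hs)
              · rcases h with ⟨h1, -, -⟩ | ⟨-, h2, -⟩
                · exact absurd (h1 ▸ hs) huS
                · rcases h2 with h2 | h2
                  · exact absurd h2 (Set.disjoint_left.1 hSR hs)
                  · exact absurd (Set.mem_singleton_iff.1 h2 ▸ hs) hwS
            · intro h
              exact absurd (h ▸ hfbij.mapsTo hs) huK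
          · have hsw : s = w := Set.mem_singleton_iff.1 hs
            rw [hsw, Function.update_self]
            constructor
            · rintro (h | h)
              · exact absurd h (hw k)
              · rcases h with ⟨h1, -, -⟩ | ⟨h1, -, -⟩
                · exact absurd h1.symm huw
                · exact absurd (h1 ▸ hk) huK
            · intro h
              exact absurd (h ▸ hk) huK
          · have hs' : s = w := Set.mem_singleton_iff.1 hs
            have hk' : k = u := Set.mem_singleton_iff.1 hk
            rw [hs', hk', Function.update_self]
            exact iff_of_true (Or.inr (Or.inr ⟨rfl, Or.inr rfl, Ne.symm huw⟩)) rfl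
        · -- head sparse
          have heq : restrictSet (H ⊔ star' u (R ∪ {w})) (R \ {u}) =
              restrictSet (restrictSet H R) (R \ {u}) := by
            ext x y
            simp only [restrict_adj, SimpleGraph.sup_adj, star'_adj]
            constructor
            · rintro ⟨h | h, hx, hy⟩
              · exact ⟨⟨h, hx.1, hy.1⟩, hx, hy⟩
              · rcases h with ⟨h1, -, -⟩ | ⟨h1, -, -⟩
                · exact absurd (Set.mem_singleton_iff.2 h1) hx.2
                · exact absurd (Set.mem_singleton_iff.2 h1) hy.2
            · rintro ⟨⟨h, -, -⟩, hx, hy⟩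
              exact ⟨Or.inl h, hx, hy⟩
          rw [heq]
          exact isP4Sparse_restrict hRsparse _
      · -- fill count
        have hset : (H ⊔ star' u (R ∪ {w})).edgeSet \ (addTail H u w).edgeSet =
            (fun z => s(u, z)) '' (R \ (H.neighborSet u ∪ {u})) := by
          ext e
          induction e using Sym2.ind with
          | _ x y =>
            constructor
            · rintro ⟨hadj, hnb⟩
              rw [SimpleGraph.mem_edgeSet] at hadj
              rcases hadj with hH | hst
              · exact absurd ((SimpleGraph.mem_edgeSet _).2 (addTail_adj.2 (Or.inl hH))) hnb
              rcases hst with ⟨hx1, hyA, hyne⟩ | ⟨hy1, hxA, hxne⟩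
              · rw [hx1] at hnb ⊢
                refine ⟨y, ⟨?_, ?_⟩, rfl⟩
                · rcases hyA with h | h
                  · exact h
                  · rw [Set.mem_singleton_iff.1 h] at hnb
                    exact absurd ((SimpleGraph.mem_edgeSet _).2 hbase_uw) hnb
                · rintro (h | h)
                  · exact hnb ((SimpleGraph.mem_edgeSet _).2
                      (addTail_adj.2 (Or.inl ((SimpleGraph.mem_neighborSet _ _ _).1 h))))
                  · exact hyne (Set.mem_singleton_iff.1 h)
              · rw [hy1] at hnb ⊢
                refine ⟨x, ⟨?_, ?_⟩, Sym2.eq_swap⟩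
                · rcases hxA with h | h
                  · exact h
                  · rw [Set.mem_singleton_iff.1 h] at hnb
                    exact absurd ((SimpleGraph.mem_edgeSet _).2 hbase_uw.symm) hnb
                · rintro (h | h)
                  · exact hnb ((SimpleGraph.mem_edgeSet _).2
                      (addTail_adj.2 (Or.inl ((SimpleGraph.mem_neighborSet _ _ _).1 h).symm)))
                  · exact hxne (Set.mem_singleton_iff.1 h)
            · rintro ⟨z, ⟨hzR, hzN⟩, he⟩
              have hzu : z ≠ u := fun h => hzN (Or.inr (Set.mem_singleton_iff.2 h))
              rw [← he]
              constructor
              · exact (SimpleGraph.mem_edgeSet _).2 (Or.inr (Or.inl ⟨rfl, Or.inl hzR, hzu⟩))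
              · intro hmem
                rw [SimpleGraph.mem_edgeSet, addTail_adj] at hmem
                rcases hmem with h | ⟨h, -⟩
                · exact hzN (Or.inl ((SimpleGraph.mem_neighborSet _ _ _).2 h))
                · rcases Sym2.eq_iff.1 h with ⟨-, h2⟩ | ⟨h1, -⟩
                  · exact hwR (h2 ▸ hzR)
                  · exact huw h1
        rw [fillCount, hset, Set.ncard_image_of_injOn]
        intro z1 h1 z2 h2 he
        rcases Sym2.eq_iff.1 he with ⟨-, h⟩ | ⟨h1', -⟩
        · exact h
        · exact absurd (Set.mem_singleton_iff.2 h1'.symm : z2 ∈ ({u} : Set α))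
            (fun hh => h2.2 (Or.inr hh))
    have mem2 : ∃ G2 : SimpleGraph α, addTail H u w ≤ G2 ∧ IsP4Sparse G2 ∧
        fillCount (addTail H u w) G2 = K.ncard + f' := by
      classical
      obtain ⟨G'', hG''le, hG''supp, hG''sp, hG''fill⟩ := hf'.1
      have hbase2le : addTail (restrictSet H R) u w ≤ addTail H u w := by
        intro x y hxy
        rw [addTail_adj] at hxy ⊢
        rcases hxy with ⟨h, -, -⟩ | h
        · exact Or.inl h
        · exact Or.inr h
      have hG''uw : G''.Adj u w := hG''le (addTail_adj.2 (Or.inr ⟨rfl, huw⟩))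
      refine ⟨H ⊔ G'' ⊔ star' w K, ?_, ?_, ?_⟩
      · -- addTail H u w ≤ G2
        intro x y hxy
        rw [addTail_adj] at hxy
        rcases hxy with hH | ⟨he, hne⟩
        · exact Or.inl (Or.inl hH)
        · rcases Sym2.eq_iff.1 he with ⟨hx1, hy1⟩ | ⟨hx1, hy1⟩
          · rw [hx1, hy1]; exact Or.inl (Or.inr hG''uw)
          · rw [hx1, hy1]; exact Or.inl (Or.inr hG''uw.symm)
      · -- P4-sparse via the spider lemma
        apply spider_sparse (S := S) (K := K) (R := R ∪ {w}) (f := f)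
        · -- cover
          ext v
          simp only [Set.mem_union, Set.mem_univ, iff_true, Set.mem_singleton_iff]
          by_cases hv : v = w
          · exact Or.inr (Or.inr hv)
          · rcases tri v hv with h | h | h
            · exact Or.inl (Or.inl h)
            · exact Or.inl (Or.inr h)
            · exact Or.inr (Or.inl h)
        · exact hSK
        · rw [Set.disjoint_left]
          rintro v hv (hv' | hv')
          · exact Set.disjoint_left.1 hSR hv hv'
          · exact hwS ((Set.mem_singleton_iff.1 hv') ▸ hv)
        · rw [Set.disjoint_left]
          rintro v hv (hv' | hv')
          · exact Set.disjoint_left.1 hKR hv hv'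
          · exact hwK ((Set.mem_singleton_iff.1 hv') ▸ hv)
        · -- independence of S
          intro x hx y hy hadj
          rcases hadj with (h | h) | h
          · exact hSind x hx y hy h
          · rcases (hG''supp x y h).1 with h' | h'
            · exact Set.disjoint_left.1 hSR hx h'
            · exact hwS ((Set.mem_singleton_iff.1 h') ▸ hx)
          · rcases h with ⟨h1, -, -⟩ | ⟨h1, -, -⟩
            · exact hwS (h1 ▸ hx)
            · exact hwS (h1 ▸ hy)
        · -- clique on K
          intro x hx y hy hne
          exact Or.inl (Or.inl (hKcl hx hy hne))
        · -- R ∪ {w} adjacent to all of K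
          intro r hr k hk
          rcases hr with hr | hr
          · exact Or.inl (Or.inl (hRK r hr k hk))
          · rw [Set.mem_singleton_iff.1 hr]
            exact Or.inr (Or.inl ⟨rfl, hk, fun h => hwK (h ▸ hk)⟩)
        · -- R ∪ {w} not adjacent to S
          intro r hr s hs hadj
          rcases hadj with (h | h) | h
          · rcases hr with hr | hr
            · exact hRS r hr s hs h
            · rw [Set.mem_singleton_iff.1 hr] at h
              exact hw s h
          · rcases (hG''supp r s h).2 with h' | h'
            · exact Set.disjoint_left.1 hSR hs h'
            · exact hwS ((Set.mem_singleton_iff.1 h') ▸ hs)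
          · rcases h with ⟨-, h2, -⟩ | ⟨h1, -, -⟩
            · exact Set.disjoint_left.1 hSK hs h2
            · exact hwS (h1 ▸ hs)
        · exact hfbij.mapsTo
        · exact hfbij.injOn
        · -- adjacency iff
          intro s hs k hk
          constructor
          · rintro ((h | h) | h)
            · exact (hfiff s hs k hk).1 h
            · rcases (hG''supp s k h).1 with h' | h'
              · exact absurd h' (Set.disjoint_left.1 hSR hs)
              · exact absurd ((Set.mem_singleton_iff.1 h') ▸ hs) hwS
            · rcases h with ⟨h1, -, -⟩ | ⟨h1, -, -⟩
              · exact absurd (h1 ▸ hs) hwS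
              · exact absurd (h1 ▸ hk) hwK
          · intro h
            exact Or.inl (Or.inl ((hfiff s hs k hk).2 h))
        · -- head equals G''
          have heq : restrictSet (H ⊔ G'' ⊔ star' w K) (R ∪ {w}) = G'' := by
            ext x y
            simp only [restrict_adj, SimpleGraph.sup_adj, star'_adj]
            constructor
            · rintro ⟨(h | h) | h, hx, hy⟩
              · have hxR : x ∈ R := by
                  rcases hx with h' | h'
                  · exact h'
                  · rw [Set.mem_singleton_iff.1 h'] at h
                    exact absurd h (hw y)
                have hyR : y ∈ R := by
                  rcases hy with h' | h'
                  · exact h'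
                  · rw [Set.mem_singleton_iff.1 h'] at h
                    exact absurd h.symm (hw x)
                exact hG''le (addTail_adj.2 (Or.inl ⟨h, hxR, hyR⟩))
              · exact h
              · exfalso
                rcases h with ⟨-, h2, h3⟩ | ⟨-, h2, h3⟩
                · rcases hy with h' | h'
                  · exact Set.disjoint_left.1 hKR h2 h'
                  · exact h3 (Set.mem_singleton_iff.1 h')
                · rcases hx with h' | h'
                  · exact Set.disjoint_left.1 hKR h2 h'
                  · exact h3 (Set.mem_singleton_iff.1 h')
            · intro h
              exact ⟨Or.inl (Or.inr h), (hG''supp x y h).1, (hG''supp x y h).2⟩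
          rw [heq]
          exact hG''sp
      · -- fill count
        have hset : (H ⊔ G'' ⊔ star' w K).edgeSet \ (addTail H u w).edgeSet =
            ((fun k => s(w, k)) '' K) ∪ (G''.edgeSet \ (addTail (restrictSet H R) u w).edgeSet) := by
          ext e
          induction e using Sym2.ind with
          | _ x y =>
            constructor
            · rintro ⟨hadj, hnb⟩
              rw [SimpleGraph.mem_edgeSet] at hadj
              rcases hadj with (hH | hG) | hst
              · exact absurd ((SimpleGraph.mem_edgeSet _).2 (addTail_adj.2 (Or.inl hH))) hnb
              · refine Or.inr ⟨(SimpleGraph.mem_edgeSet _).2 hG, fun hmem => ?_⟩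
                exact hnb ((SimpleGraph.mem_edgeSet _).2
                  (hbase2le ((SimpleGraph.mem_edgeSet _).1 hmem)))
              · rcases hst with ⟨hx1, hyK, -⟩ | ⟨hy1, hxK, -⟩
                · exact Or.inl ⟨y, hyK, by rw [hx1]⟩
                · exact Or.inl ⟨x, hxK, by rw [hy1, Sym2.eq_swap]⟩
            · rintro (⟨k, hk, he⟩ | ⟨hG, hnb2⟩)
              · rw [← he]
                constructor
                · exact (SimpleGraph.mem_edgeSet _).2
                    (Or.inr (Or.inl ⟨rfl, hk, fun h => hwK (h ▸ hk)⟩))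
                · intro hmem
                  rw [SimpleGraph.mem_edgeSet, addTail_adj] at hmem
                  rcases hmem with h | ⟨h, -⟩
                  · exact hw k h
                  · rcases Sym2.eq_iff.1 h with ⟨h1, -⟩ | ⟨-, h2⟩
                    · exact huw h1.symm
                    · exact huK (h2 ▸ hk)
              · refine ⟨(SimpleGraph.mem_edgeSet _).2
                  (Or.inl (Or.inr ((SimpleGraph.mem_edgeSet _).1 hG))), fun hmem => ?_⟩
                have hGadj : G''.Adj x y := (SimpleGraph.mem_edgeSet _).1 hG
                rw [SimpleGraph.mem_edgeSet, addTail_adj] at hmem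
                apply hnb2
                rw [SimpleGraph.mem_edgeSet, addTail_adj]
                rcases hmem with h | h
                · have hxR : x ∈ R := by
                    rcases (hG''supp x y hGadj).1 with h' | h'
                    · exact h'
                    · rw [Set.mem_singleton_iff.1 h'] at h
                      exact absurd h (hw y)
                  have hyR : y ∈ R := by
                    rcases (hG''supp x y hGadj).2 with h' | h'
                    · exact h'
                    · rw [Set.mem_singleton_iff.1 h'] at h
                      exact absurd h.symm (hw x)
                  exact Or.inl ⟨h, hxR, hyR⟩
                · exact Or.inr h
        have hdisjU : Disjoint ((fun k => s(w, k)) '' K)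
            (G''.edgeSet \ (addTail (restrictSet H R) u w).edgeSet) := by
          rw [Set.disjoint_left]
          rintro e ⟨k, hk, he⟩ ⟨hG, -⟩
          rw [← he, SimpleGraph.mem_edgeSet] at hG
          rcases (hG''supp w k hG).2 with h' | h'
          · exact Set.disjoint_left.1 hKR hk h'
          · exact hwK ((Set.mem_singleton_iff.1 h') ▸ hk)
        have hinjw : Set.InjOn (fun k => s(w, k)) K := by
          intro k1 hk1 k2 hk2 he
          rcases Sym2.eq_iff.1 he with ⟨-, h⟩ | ⟨h1, -⟩
          · exact h
          · exact absurd (show w ∈ K by rw [h1]; exact hk2) hwK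
        have hfc : (G''.edgeSet \ (addTail (restrictSet H R) u w).edgeSet).ncard = f' :=
          hG''fill
        rw [fillCount, hset, Set.ncard_union_eq hdisjU (Set.toFinite _) (Set.toFinite _),
          Set.ncard_image_of_injOn hinjw, hfc]
    rcases le_total ((R \ (H.neighborSet u ∪ {u})).ncard) (K.ncard + f') with hmin | hmin
    · obtain ⟨G1, h1, h2, h3⟩ := mem1
      exact ⟨G1, h1, h2, by rw [h3, min_eq_left hmin]⟩
    · obtain ⟨G2, h1, h2, h3⟩ := mem2
      exact ⟨G2, h1, h2, by rw [h3, min_eq_right hmin]⟩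
  · -- lower bound
    rintro n ⟨G', hle, hsp, rfl⟩
    classical
    have hG'uw : G'.Adj u w := hle hbase_uw
    by_cases hcase : ∀ x ∈ R \ (H.neighborSet u ∪ {u}), G'.Adj w x ∨ G'.Adj u x
    · -- case 1 : at least |R \ N[u]| fill edges
      have himg : (fun x => if G'.Adj w x then s(w, x) else s(u, x)) ''
          (R \ (H.neighborSet u ∪ {u})) ⊆
          G'.edgeSet \ (addTail H u w).edgeSet := by
        rintro e ⟨x, hx, rfl⟩
        have hxu : x ≠ u := fun h => hx.2 (Or.inr (Set.mem_singleton_iff.2 h))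
        have hxw : x ≠ w := fun h => hwR (h ▸ hx.1)
        by_cases hwx : G'.Adj w x
        · simp only [if_pos hwx]
          refine ⟨(SimpleGraph.mem_edgeSet _).2 hwx, fun hmem => ?_⟩
          rw [SimpleGraph.mem_edgeSet, addTail_adj] at hmem
          rcases hmem with h | ⟨h, -⟩
          · exact hw x h
          · rcases Sym2.eq_iff.1 h with ⟨h1, -⟩ | ⟨-, h2⟩
            · exact huw h1.symm
            · exact hxu h2
        · simp only [if_neg hwx]
          have hux : G'.Adj u x := (hcase x hx).resolve_left hwx
          refine ⟨(SimpleGraph.mem_edgeSet _).2 hux, fun hmem => ?_⟩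
          rw [SimpleGraph.mem_edgeSet, addTail_adj] at hmem
          rcases hmem with h | ⟨h, -⟩
          · exact hx.2 (Or.inl ((SimpleGraph.mem_neighborSet _ _ _).2 h))
          · rcases Sym2.eq_iff.1 h with ⟨-, h2⟩ | ⟨h1, -⟩
            · exact hxw h2
            · exact huw h1
      have hinj : Set.InjOn (fun x => if G'.Adj w x then s(w, x) else s(u, x))
          (R \ (H.neighborSet u ∪ {u})) := by
        intro x1 h1 x2 h2 he
        have hx1u : x1 ≠ u := fun h => h1.2 (Or.inr (Set.mem_singleton_iff.2 h))
        have hx1w : x1 ≠ w := fun h => hwR (h ▸ h1.1)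
        have hx2w : x2 ≠ w := fun h => hwR (h ▸ h2.1)
        simp only at he
        by_cases b1 : G'.Adj w x1 <;> by_cases b2 : G'.Adj w x2
        · rw [if_pos b1, if_pos b2] at he
          rcases Sym2.eq_iff.1 he with ⟨-, h⟩ | ⟨h1', -⟩
          · exact h
          · exact absurd h1'.symm hx2w
        · rw [if_pos b1, if_neg b2] at he
          rcases Sym2.eq_iff.1 he with ⟨h1', -⟩ | ⟨h1', -⟩
          · exact absurd h1'.symm huw
          · exact absurd h1'.symm hx2w
        · rw [if_neg b1, if_pos b2] at he
          rcases Sym2.eq_iff.1 he with ⟨h1', -⟩ | ⟨-, h2'⟩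
          · exact absurd h1' huw
          · exact absurd h2' hx1w
        · rw [if_neg b1, if_neg b2] at he
          rcases Sym2.eq_iff.1 he with ⟨-, h⟩ | ⟨-, h2'⟩
          · exact h
          · exact absurd h2' hx1u
      have hcard := Set.ncard_le_ncard himg (Set.toFinite _)
      rw [Set.ncard_image_of_injOn hinj] at hcard
      exact le_trans (min_le_left _ _) hcard
    · -- case 2 : at least |K| + f' fill edges
      push_neg at hcase
      obtain ⟨x, hx, hwx, hux⟩ := hcase
      have hxR : x ∈ R := hx.1
      have hxu : x ≠ u := fun h => hx.2 (Or.inr (Set.mem_singleton_iff.2 h))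
      have hxw : x ≠ w := fun h => hwR (h ▸ hx.1)
      have hsig : ∀ k : α, ∃ s : α, k ∈ K → s ∈ S ∧ f s = k := by
        intro k
        by_cases hk : k ∈ K
        · obtain ⟨s, hs, hfs⟩ := hfbij.surjOn hk
          exact ⟨s, fun _ => ⟨hs, hfs⟩⟩
        · exact ⟨u, fun h => absurd h hk⟩
      choose σ hσ using hsig
      have claim : ∀ k ∈ K, G'.Adj w k ∨ G'.Adj w (σ k) ∨ G'.Adj u (σ k) := by
        intro k hk
        by_contra hcon
        push_neg at hcon
        obtain ⟨hc1, hc2, hc3⟩ := hcon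
        obtain ⟨hsS, hfs⟩ := hσ k hk
        have hku : k ≠ u := fun h => huK (h ▸ hk)
        have hkw : k ≠ w := fun h => hwK (h ▸ hk)
        have hsu : σ k ≠ u := fun h => huS (h ▸ hsS)
        have hsw : σ k ≠ w := fun h => hwS (h ▸ hsS)
        have hsk : σ k ≠ k := fun h =>
          Set.disjoint_left.1 hSK hsS (show σ k ∈ K by rw [h]; exact hk)
        have hsx : σ k ≠ x := fun h =>
          Set.disjoint_left.1 hSR hsS (show σ k ∈ R by rw [h]; exact hxR)
        have hkx : k ≠ x := fun h =>
          Set.disjoint_left.1 hKR hk (show k ∈ R by rw [h]; exact hxR)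
        have hH_ks : H.Adj k (σ k) := ((hfiff (σ k) hsS k hk).2 hfs.symm).symm
        have p1 : IsInducedP4 G' w u k (σ k) :=
          ⟨huw.symm, hkw.symm, hsw.symm, hku.symm, hsu.symm, hsk.symm,
            hG'uw.symm, hle (addTail_adj.2 (Or.inl (hRK u hu k hk))),
            hle (addTail_adj.2 (Or.inl hH_ks)), hc1, hc2, hc3⟩
        have p2 : IsInducedP4 G' w u k x :=
          ⟨huw.symm, hkw.symm, hxw.symm, hku.symm, hxu.symm, hkx,
            hG'uw.symm, hle (addTail_adj.2 (Or.inl (hRK u hu k hk))),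
            hle (addTail_adj.2 (Or.inl (hRK x hxR k hk).symm)), hc1, hwx, hux⟩
        have h5 : ({w, u, k, σ k, x} : Set α).ncard = 5 :=
          ncard5 huw.symm hkw.symm hsw.symm hxw.symm hku.symm hsu.symm hxu.symm
            hsk.symm hkx hsx
        have hsub1 : ({w, u, k, σ k} : Set α) ⊆ ({w, u, k, σ k, x} : Set α) := by
          intro z hz
          simp only [Set.mem_insert_iff, Set.mem_singleton_iff] at hz ⊢
          tauto
        have hsub2 : ({w, u, k, x} : Set α) ⊆ ({w, u, k, σ k, x} : Set α) := by
          intro z hz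
          simp only [Set.mem_insert_iff, Set.mem_singleton_iff] at hz ⊢
          tauto
        have heq := hsp ({w, u, k, σ k, x} : Set α) h5 _ hsub1 _ hsub2
          ⟨w, u, k, σ k, rfl, p1⟩ ⟨w, u, k, x, rfl, p2⟩
        have hmem : σ k ∈ ({w, u, k, x} : Set α) :=
          heq ▸ (by simp : σ k ∈ ({w, u, k, σ k} : Set α))
        have : σ k = w ∨ σ k = u ∨ σ k = k ∨ σ k = x := by simpa using hmem
        rcases this with h | h | h | h
        · exact hsw h
        · exact hsu h
        · exact hsk h
        · exact hsx h
      have himg : (fun k => if G'.Adj w k then s(w, k) else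
          if G'.Adj w (σ k) then s(w, σ k) else s(u, σ k)) '' K ⊆
          G'.edgeSet \ (addTail H u w).edgeSet := by
        rintro e ⟨k, hk, rfl⟩
        obtain ⟨hsS, hfs⟩ := hσ k hk
        by_cases c1 : G'.Adj w k
        · simp only [if_pos c1]
          refine ⟨(SimpleGraph.mem_edgeSet _).2 c1, fun hmem => ?_⟩
          rw [SimpleGraph.mem_edgeSet, addTail_adj] at hmem
          rcases hmem with h | ⟨h, -⟩
          · exact hw k h
          · rcases Sym2.eq_iff.1 h with ⟨h1, -⟩ | ⟨-, h2⟩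
            · exact huw h1.symm
            · exact huK (h2 ▸ hk)
        · by_cases c2 : G'.Adj w (σ k)
          · simp only [if_neg c1, if_pos c2]
            refine ⟨(SimpleGraph.mem_edgeSet _).2 c2, fun hmem => ?_⟩
            rw [SimpleGraph.mem_edgeSet, addTail_adj] at hmem
            rcases hmem with h | ⟨h, -⟩
            · exact hw (σ k) h
            · rcases Sym2.eq_iff.1 h with ⟨h1, -⟩ | ⟨-, h2⟩
              · exact huw h1.symm
              · exact huS (h2 ▸ hsS)
          · simp only [if_neg c1, if_neg c2]
            have c3 : G'.Adj u (σ k) := ((claim k hk).resolve_left c1).resolve_left c2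
            refine ⟨(SimpleGraph.mem_edgeSet _).2 c3, fun hmem => ?_⟩
            rw [SimpleGraph.mem_edgeSet, addTail_adj] at hmem
            rcases hmem with h | ⟨h, -⟩
            · exact hRS u hu (σ k) hsS h
            · rcases Sym2.eq_iff.1 h with ⟨-, h2⟩ | ⟨h1, -⟩
              · exact hwS (h2 ▸ hsS)
              · exact huw h1
      have hinj : Set.InjOn (fun k => if G'.Adj w k then s(w, k) else
          if G'.Adj w (σ k) then s(w, σ k) else s(u, σ k)) K := by
        intro k1 hk1 k2 hk2 he
        obtain ⟨hsS1, hfs1⟩ := hσ k1 hk1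
        obtain ⟨hsS2, hfs2⟩ := hσ k2 hk2
        have hsiginj : σ k1 = σ k2 → k1 = k2 := by
          intro h
          rw [← hfs1, h, hfs2]
        simp only at he
        by_cases c1 : G'.Adj w k1 <;> by_cases c2 : G'.Adj w k2
        · rw [if_pos c1, if_pos c2] at he
          rcases Sym2.eq_iff.1 he with ⟨-, h⟩ | ⟨h1, -⟩
          · exact h
          · exact absurd (show w ∈ K by rw [h1]; exact hk2) hwK
        · rw [if_pos c1, if_neg c2] at he
          by_cases d2 : G'.Adj w (σ k2)
          · rw [if_pos d2] at he
            rcases Sym2.eq_iff.1 he with ⟨-, h⟩ | ⟨h1, -⟩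
            · exact absurd (show σ k2 ∈ K by rw [← h]; exact hk1)
                (Set.disjoint_left.1 hSK hsS2)
            · exact absurd (show w ∈ S by rw [h1]; exact hsS2) hwS
          · rw [if_neg d2] at he
            rcases Sym2.eq_iff.1 he with ⟨h1, -⟩ | ⟨h1, -⟩
            · exact absurd h1.symm huw
            · exact absurd (show w ∈ S by rw [h1]; exact hsS2) hwS
        · rw [if_neg c1, if_pos c2] at he
          by_cases d1 : G'.Adj w (σ k1)
          · rw [if_pos d1] at he
            rcases Sym2.eq_iff.1 he with ⟨-, h⟩ | ⟨-, h2⟩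
            · exact absurd (show σ k1 ∈ K by rw [h]; exact hk2)
                (Set.disjoint_left.1 hSK hsS1)
            · exact absurd (show w ∈ S by rw [← h2]; exact hsS1) hwS
          · rw [if_neg d1] at he
            rcases Sym2.eq_iff.1 he with ⟨h1, -⟩ | ⟨h1, -⟩
            · exact absurd h1 huw
            · exact absurd (show u ∈ K by rw [h1]; exact hk2) huK
        · rw [if_neg c1, if_neg c2] at he
          by_cases d1 : G'.Adj w (σ k1) <;> by_cases d2 : G'.Adj w (σ k2)
          · rw [if_pos d1, if_pos d2] at he
            rcases Sym2.eq_iff.1 he with ⟨-, h⟩ | ⟨h1, -⟩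
            · exact hsiginj h
            · exact absurd (show w ∈ S by rw [h1]; exact hsS2) hwS
          · rw [if_pos d1, if_neg d2] at he
            rcases Sym2.eq_iff.1 he with ⟨h1, -⟩ | ⟨h1, -⟩
            · exact absurd h1.symm huw
            · exact absurd (show w ∈ S by rw [h1]; exact hsS2) hwS
          · rw [if_neg d1, if_pos d2] at he
            rcases Sym2.eq_iff.1 he with ⟨h1, -⟩ | ⟨h1, -⟩
            · exact absurd h1 huw
            · exact absurd (show u ∈ S by rw [h1]; exact hsS2) huS
          · rw [if_neg d1, if_neg d2] at he
            rcases Sym2.eq_iff.1 he with ⟨-, h⟩ | ⟨h1, -⟩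
            · exact hsiginj h
            · exact absurd (show u ∈ S by rw [h1]; exact hsS2) huS
      -- the restriction of G' to R ∪ {w} is a completion of the small problem
      have hble : addTail (restrictSet H R) u w ≤ restrictSet G' (R ∪ {w}) := by
        intro a b hab
        rw [addTail_adj] at hab
        rcases hab with ⟨h, ha, hb⟩ | ⟨heq, -⟩
        · exact ⟨hle (addTail_adj.2 (Or.inl h)), Or.inl ha, Or.inl hb⟩
        · rcases Sym2.eq_iff.1 heq with ⟨ha1, hb1⟩ | ⟨ha1, hb1⟩
          · rw [ha1, hb1]; exact ⟨hG'uw, Or.inl hu, Or.inr rfl⟩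
          · rw [ha1, hb1]; exact ⟨hG'uw.symm, Or.inr rfl, Or.inl hu⟩
      have hf'le : f' ≤ ((restrictSet G' (R ∪ {w})).edgeSet \
          (addTail (restrictSet H R) u w).edgeSet).ncard :=
        hf'.2 ⟨restrictSet G' (R ∪ {w}), hble, fun a b h => ⟨h.2.1, h.2.2⟩,
          isP4Sparse_restrict hsp _, rfl⟩
      have hF2sub : (restrictSet G' (R ∪ {w})).edgeSet \
          (addTail (restrictSet H R) u w).edgeSet ⊆
          G'.edgeSet \ (addTail H u w).edgeSet := by
        intro e
        induction e using Sym2.ind with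
        | _ a b =>
          rintro ⟨hmem, hnmem⟩
          rw [SimpleGraph.mem_edgeSet] at hmem
          refine ⟨(SimpleGraph.mem_edgeSet _).2 hmem.1, fun hbm => ?_⟩
          rw [SimpleGraph.mem_edgeSet, addTail_adj] at hbm
          apply hnmem
          rw [SimpleGraph.mem_edgeSet, addTail_adj]
          rcases hbm with h | h
          · have haR : a ∈ R := by
              rcases hmem.2.1 with h' | h'
              · exact h'
              · rw [Set.mem_singleton_iff.1 h'] at h
                exact absurd h (hw b)
            have hbR : b ∈ R := by
              rcases hmem.2.2 with h' | h'
              · exact h'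
              · rw [Set.mem_singleton_iff.1 h'] at h
                exact absurd h.symm (hw a)
            exact Or.inl ⟨h, haR, hbR⟩
          · exact Or.inr h
      have hdisj : Disjoint ((fun k => if G'.Adj w k then s(w, k) else
          if G'.Adj w (σ k) then s(w, σ k) else s(u, σ k)) '' K)
          ((restrictSet G' (R ∪ {w})).edgeSet \
            (addTail (restrictSet H R) u w).edgeSet) := by
        rw [Set.disjoint_left]
        rintro e ⟨k, hk, rfl⟩ ⟨hmem, -⟩
        obtain ⟨hsS, hfs⟩ := hσ k hk
        by_cases c1 : G'.Adj w k
        · simp only [if_pos c1] at hmem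
          rw [SimpleGraph.mem_edgeSet] at hmem
          rcases hmem.2.2 with h' | h'
          · exact Set.disjoint_left.1 hKR hk h'
          · exact hwK ((Set.mem_singleton_iff.1 h') ▸ hk)
        · by_cases c2 : G'.Adj w (σ k)
          · simp only [if_neg c1, if_pos c2] at hmem
            rw [SimpleGraph.mem_edgeSet] at hmem
            rcases hmem.2.2 with h' | h'
            · exact Set.disjoint_left.1 hSR hsS h'
            · exact hwS ((Set.mem_singleton_iff.1 h') ▸ hsS)
          · simp only [if_neg c1, if_neg c2] at hmem
            rw [SimpleGraph.mem_edgeSet] at hmem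
            rcases hmem.2.2 with h' | h'
            · exact Set.disjoint_left.1 hSR hsS h'
            · exact hwS ((Set.mem_singleton_iff.1 h') ▸ hsS)
      have hcardK := Set.ncard_image_of_injOn hinj
      have hun := Set.ncard_union_eq hdisj (Set.toFinite _) (Set.toFinite _)
      have hsubF := Set.ncard_le_ncard (Set.union_subset himg hF2sub) (Set.toFinite _)
      show min _ _ ≤ (G'.edgeSet \ (addTail H u w).edgeSet).ncard
      calc min (R \ (H.neighborSet u ∪ {u})).ncard (K.ncard + f')
          ≤ K.ncard + f' := min_le_right _ _
        _ ≤ ((fun k => if G'.Adj w k then s(w, k) else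
              if G'.Adj w (σ k) then s(w, σ k) else s(u, σ k)) '' K).ncard +
            ((restrictSet G' (R ∪ {w})).edgeSet \
              (addTail (restrictSet H R) u w).edgeSet).ncard := by
            rw [hcardK]; exact Nat.add_le_add_left hf'le _
        _ = ((fun k => if G'.Adj w k then s(w, k) else
              if G'.Adj w (σ k) then s(w, σ k) else s(u, σ k)) '' K ∪
            ((restrictSet G' (R ∪ {w})).edgeSet \
              (addTail (restrictSet H R) u w).edgeSet)).ncard := hun.symm
        _ ≤ _ := hsubF
end

section
/- Let H be a thick spider with partition (S, K, R) such that |K| = 3 and |R| = 1, let u ∈ S, and let uw be a tail added to H (w ∉ V(H)). Then the minimum number of fill edges (excluding the tail uw) in a P4-sparse completion of H+uw equals |K| = 3. -/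
open SimpleGraph Set

variable {α : Type*}

-- ### auxiliary infrastructure

inductive V8 : Type
  | x0 | x1 | x2 | x3 | x4 | x5 | x6 | x7
  deriving DecidableEq

namespace V8

instance : Fintype V8 :=
  ⟨⟨([x0, x1, x2, x3, x4, x5, x6, x7] : Multiset V8), by decide⟩, by intro x; cases x <;> decide⟩

def tN : V8 → ℕ
  | x0 => 0 | x1 => 1 | x2 => 2 | x3 => 3 | x4 => 4 | x5 => 5 | x6 => 6 | x7 => 7

def eL : List (ℕ × ℕ) :=
  [(4,5),(4,6),(5,6),(4,7),(5,7),(6,7),(0,4),(0,5),(2,5),(2,6),(3,4),(3,6),(0,1),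
   (0,6),(0,7),(1,6)]

def adjB (i j : V8) : Bool := eL.contains (tN i, tN j) || eL.contains (tN j, tN i)

theorem adjB_symm : ∀ i j, adjB i j = adjB j i := by decide
theorem adjB_irrefl : ∀ i, adjB i i = false := by decide

def Gup : SimpleGraph V8 where
  Adj i j := adjB i j = true
  symm := ⟨fun i j h => (adjB_symm j i).trans h⟩
  loopless := ⟨fun i h => by
    have h' : adjB i i = true := h
    rw [adjB_irrefl i] at h'; exact absurd h' (by decide)⟩

instance : DecidableRel Gup.Adj := fun _ _ => inferInstanceAs (Decidable (_ = true))
instance (a b c d : V8) : Decidable (IsInducedP4 Gup a b c d) :=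
  inferInstanceAs (Decidable (_ ∧ _))

theorem classify : ∀ a b c d : V8, IsInducedP4 Gup a b c d →
    ({a,b,c,d} : Finset V8) = {x1,x0,x4,x3} ∨ ({a,b,c,d} : Finset V8) = {x2,x5,x4,x3} ∨
    ({a,b,c,d} : Finset V8) = {x1,x0,x5,x2} := by decide

end V8

def vmap (u w s1 s2 k1 k2 k3 r : α) : V8 → α
  | .x0 => u | .x1 => w | .x2 => s1 | .x3 => s2
  | .x4 => k1 | .x5 => k2 | .x6 => k3 | .x7 => r

-- ### helper lemmas
lemma ncard3' {β : Type*} {e1 e2 e3 : β} (d12 : e1 ≠ e2) (d13 : e1 ≠ e3) (d23 : e2 ≠ e3) :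
    ({e1, e2, e3} : Set β).ncard = 3 := by
  rw [Set.ncard_insert_of_notMem (by simp [d12, d13]) ((Set.finite_singleton e3).insert e2),
    Set.ncard_insert_of_notMem (by simp [d23]) (Set.finite_singleton e3), Set.ncard_singleton]

lemma ncard5' {β : Type*} {p1 p2 p3 p4 p5 : β} (h12 : p1 ≠ p2) (h13 : p1 ≠ p3) (h14 : p1 ≠ p4)
    (h15 : p1 ≠ p5) (h23 : p2 ≠ p3) (h24 : p2 ≠ p4) (h25 : p2 ≠ p5) (h34 : p3 ≠ p4)
    (h35 : p3 ≠ p5) (h45 : p4 ≠ p5) : ({p1, p2, p3, p4, p5} : Set β).ncard = 5 := by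
  rw [Set.ncard_insert_of_notMem (by simp [h12, h13, h14, h15])
      ((((Set.finite_singleton p5).insert p4).insert p3).insert p2),
    Set.ncard_insert_of_notMem (by simp [h23, h24, h25])
      (((Set.finite_singleton p5).insert p4).insert p3),
    Set.ncard_insert_of_notMem (by simp [h34, h35]) ((Set.finite_singleton p5).insert p4),
    Set.ncard_insert_of_notMem (by simp [h45]) (Set.finite_singleton p5), Set.ncard_singleton]

lemma conflict5 {G : SimpleGraph α} (hsp : IsP4Sparse G) {p1 p2 p3 p4 p5 : α}
    (h12 : p1 ≠ p2) (h13 : p1 ≠ p3) (h14 : p1 ≠ p4) (h15 : p1 ≠ p5) (h23 : p2 ≠ p3)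
    (h24 : p2 ≠ p4) (h25 : p2 ≠ p5) (h34 : p3 ≠ p4) (h35 : p3 ≠ p5) (h45 : p4 ≠ p5)
    {a b c d a' b' c' d' : α}
    (ht1 : ({a,b,c,d} : Set α) ⊆ {p1,p2,p3,p4,p5})
    (ht2 : ({a',b',c',d'} : Set α) ⊆ {p1,p2,p3,p4,p5})
    (hP1 : IsInducedP4 G a b c d) (hP2 : IsInducedP4 G a' b' c' d') :
    ({a,b,c,d} : Set α) = ({a',b',c',d'} : Set α) :=
  hsp {p1,p2,p3,p4,p5} (ncard5' h12 h13 h14 h15 h23 h24 h25 h34 h35 h45)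
    {a,b,c,d} ht1 {a',b',c',d'} ht2 ⟨a,b,c,d,rfl,hP1⟩ ⟨a',b',c',d',rfl,hP2⟩

lemma not_six {s : Set α} (hfin : s.Finite) (hs : s.ncard = 5) {q1 q2 q3 q4 q5 q6 : α}
    (m1 : q1 ∈ s) (m2 : q2 ∈ s) (m3 : q3 ∈ s) (m4 : q4 ∈ s) (m5 : q5 ∈ s) (m6 : q6 ∈ s)
    (n12 : q1 ≠ q2) (n13 : q1 ≠ q3) (n14 : q1 ≠ q4) (n15 : q1 ≠ q5) (n16 : q1 ≠ q6)
    (n23 : q2 ≠ q3) (n24 : q2 ≠ q4) (n25 : q2 ≠ q5) (n26 : q2 ≠ q6)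
    (n34 : q3 ≠ q4) (n35 : q3 ≠ q5) (n36 : q3 ≠ q6)
    (n45 : q4 ≠ q5) (n46 : q4 ≠ q6) (n56 : q5 ≠ q6) : False := by
  have hsub : ({q1,q2,q3,q4,q5,q6} : Set α) ⊆ s := by
    intro x hx
    simp only [Set.mem_insert_iff, Set.mem_singleton_iff] at hx
    rcases hx with rfl|rfl|rfl|rfl|rfl|rfl
    exacts [m1, m2, m3, m4, m5, m6]
  have h6 : ({q1,q2,q3,q4,q5,q6} : Set α).ncard = 6 := by
    rw [Set.ncard_insert_of_notMem (by simp [n12,n13,n14,n15,n16])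
        (((((Set.finite_singleton q6).insert q5).insert q4).insert q3).insert q2),
      Set.ncard_insert_of_notMem (by simp [n23,n24,n25,n26])
        ((((Set.finite_singleton q6).insert q5).insert q4).insert q3),
      Set.ncard_insert_of_notMem (by simp [n34,n35,n36])
        (((Set.finite_singleton q6).insert q5).insert q4),
      Set.ncard_insert_of_notMem (by simp [n45,n46]) ((Set.finite_singleton q6).insert q5),
      Set.ncard_insert_of_notMem (by simp [n56]) (Set.finite_singleton q6), Set.ncard_singleton]
  have := Set.ncard_le_ncard hsub hfin
  omega

lemma three_fills [Fintype α] {B G : SimpleGraph α} {x1 y1 x2 y2 x3 y3 : α}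
    (a1 : G.Adj x1 y1) (a2 : G.Adj x2 y2) (a3 : G.Adj x3 y3)
    (n1 : ¬ B.Adj x1 y1) (n2 : ¬ B.Adj x2 y2) (n3 : ¬ B.Adj x3 y3)
    (d12 : s(x1,y1) ≠ s(x2,y2)) (d13 : s(x1,y1) ≠ s(x3,y3)) (d23 : s(x2,y2) ≠ s(x3,y3)) :
    3 ≤ fillCount B G := by
  classical
  have hsub : ({s(x1,y1), s(x2,y2), s(x3,y3)} : Set (Sym2 α)) ⊆ G.edgeSet \ B.edgeSet := by
    intro e he
    simp only [Set.mem_insert_iff, Set.mem_singleton_iff] at he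
    rcases he with rfl|rfl|rfl
    exacts [⟨(G.mem_edgeSet).mpr a1, fun hc => n1 ((B.mem_edgeSet).mp hc)⟩,
      ⟨(G.mem_edgeSet).mpr a2, fun hc => n2 ((B.mem_edgeSet).mp hc)⟩,
      ⟨(G.mem_edgeSet).mpr a3, fun hc => n3 ((B.mem_edgeSet).mp hc)⟩]
  have h3 := ncard3' d12 d13 d23
  rw [fillCount, ← h3]
  exact Set.ncard_le_ncard hsub (Set.toFinite _)

set_option maxHeartbeats 2000000 in
/-- tail at `u ∈ S` of a thick spider with `|K| = 3` and `|R| = 1`. -/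
theorem thickSpider_tail_S_K3_R1 [Fintype α]
    (H : SimpleGraph α) (u w : α) (S K R : Set α)
    (hspider : ThickSpider H S K R)
    (hcover : S ∪ K ∪ R = {w}ᶜ)
    (hw : ∀ x, ¬ H.Adj w x)
    (hK3 : K.ncard = 3) (hR : R.ncard = 1) (hu : u ∈ S) :
    IsLeast (completionFills IsP4Sparse (addTail H u w)) K.ncard ∧ K.ncard = 3 := by
  classical
  obtain ⟨hSind, hKclq, hSKcard, hK2, hdSK, hdSR, hdKR, hRK, hRS, f, hfbij, hfadj⟩ := hspider
  obtain ⟨r, hReq⟩ := Set.ncard_eq_one.mp hR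
  have hrR : r ∈ R := by rw [hReq]; exact rfl
  have hScard : S.ncard = 3 := by rw [hSKcard, hK3]
  have hSdcard : (S \ {u}).ncard = 2 := by
    rw [Set.ncard_diff_singleton_of_mem hu, hScard]
  obtain ⟨s1, s2, hs12, hSdiff⟩ := Set.ncard_eq_two.mp hSdcard
  have hs1d : s1 ∈ S \ {u} := by rw [hSdiff]; exact Set.mem_insert _ _
  have hs2d : s2 ∈ S \ {u} := by rw [hSdiff]; exact Set.mem_insert_of_mem _ rfl
  have hs1S : s1 ∈ S := hs1d.1
  have hs2S : s2 ∈ S := hs2d.1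
  have hs1u : s1 ≠ u := fun e => hs1d.2 (Set.mem_singleton_iff.mpr e)
  have hs2u : s2 ≠ u := fun e => hs2d.2 (Set.mem_singleton_iff.mpr e)
  have hSeq : S = {u, s1, s2} := by
    rw [show ({u, s1, s2} : Set α) = insert u ({s1, s2} : Set α) from rfl, ← hSdiff,
      Set.insert_diff_singleton, Set.insert_eq_of_mem hu]
  have hk1K : f s1 ∈ K := hfbij.mapsTo hs1S
  have hk2K : f s2 ∈ K := hfbij.mapsTo hs2S
  have hk3K : f u ∈ K := hfbij.mapsTo hu
  have hWne : ∀ x, x ∈ S ∪ K ∪ R → x ≠ w := fun x hx => by rw [hcover] at hx; exact hx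
  have hne01 : u ≠ w := hWne u (Set.mem_union_left _ (Set.mem_union_left _ hu))
  have hne02 : u ≠ s1 := hs1u.symm
  have hne03 : u ≠ s2 := hs2u.symm
  have hne04 : u ≠ (f s1) := hdSK.ne_of_mem hu hk1K
  have hne05 : u ≠ (f s2) := hdSK.ne_of_mem hu hk2K
  have hne06 : u ≠ (f u) := hdSK.ne_of_mem hu hk3K
  have hne07 : u ≠ r := hdSR.ne_of_mem hu hrR
  have hne12 : w ≠ s1 := (hWne s1 (Set.mem_union_left _ (Set.mem_union_left _ hs1S))).symm
  have hne13 : w ≠ s2 := (hWne s2 (Set.mem_union_left _ (Set.mem_union_left _ hs2S))).symm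
  have hne14 : w ≠ (f s1) := (hWne (f s1) (Set.mem_union_left _ (Set.mem_union_right _ hk1K))).symm
  have hne15 : w ≠ (f s2) := (hWne (f s2) (Set.mem_union_left _ (Set.mem_union_right _ hk2K))).symm
  have hne16 : w ≠ (f u) := (hWne (f u) (Set.mem_union_left _ (Set.mem_union_right _ hk3K))).symm
  have hne17 : w ≠ r := (hWne r (Set.mem_union_right _ hrR)).symm
  have hne23 : s1 ≠ s2 := hs12
  have hne24 : s1 ≠ (f s1) := hdSK.ne_of_mem hs1S hk1K
  have hne25 : s1 ≠ (f s2) := hdSK.ne_of_mem hs1S hk2K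
  have hne26 : s1 ≠ (f u) := hdSK.ne_of_mem hs1S hk3K
  have hne27 : s1 ≠ r := hdSR.ne_of_mem hs1S hrR
  have hne34 : s2 ≠ (f s1) := hdSK.ne_of_mem hs2S hk1K
  have hne35 : s2 ≠ (f s2) := hdSK.ne_of_mem hs2S hk2K
  have hne36 : s2 ≠ (f u) := hdSK.ne_of_mem hs2S hk3K
  have hne37 : s2 ≠ r := hdSR.ne_of_mem hs2S hrR
  have hne45 : (f s1) ≠ (f s2) := (hfbij.injOn.ne_iff hs1S hs2S).mpr hs12
  have hne46 : (f s1) ≠ (f u) := (hfbij.injOn.ne_iff hs1S hu).mpr hs1u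
  have hne47 : (f s1) ≠ r := hdKR.ne_of_mem hk1K hrR
  have hne56 : (f s2) ≠ (f u) := (hfbij.injOn.ne_iff hs2S hu).mpr hs2u
  have hne57 : (f s2) ≠ r := hdKR.ne_of_mem hk2K hrR
  have hne67 : (f u) ≠ r := hdKR.ne_of_mem hk3K hrR
  have hH04 : H.Adj u (f s1) := (hfadj u hu (f s1) hk1K).mpr hne46
  have hH05 : H.Adj u (f s2) := (hfadj u hu (f s2) hk2K).mpr hne56
  have hH25 : H.Adj s1 (f s2) := (hfadj s1 hs1S (f s2) hk2K).mpr hne45.symm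
  have hH26 : H.Adj s1 (f u) := (hfadj s1 hs1S (f u) hk3K).mpr hne46.symm
  have hH34 : H.Adj s2 (f s1) := (hfadj s2 hs2S (f s1) hk1K).mpr hne45
  have hH36 : H.Adj s2 (f u) := (hfadj s2 hs2S (f u) hk3K).mpr hne56.symm
  have hH45 : H.Adj (f s1) (f s2) := hKclq hk1K hk2K hne45
  have hH46 : H.Adj (f s1) (f u) := hKclq hk1K hk3K hne46
  have hH47 : H.Adj (f s1) r := (hRK r hrR (f s1) hk1K).symm
  have hH56 : H.Adj (f s2) (f u) := hKclq hk2K hk3K hne56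
  have hH57 : H.Adj (f s2) r := (hRK r hrR (f s2) hk2K).symm
  have hH67 : H.Adj (f u) r := (hRK r hrR (f u) hk3K).symm
  have hnH01 : ¬ H.Adj u w := fun h => hw u h.symm
  have hnH02 : ¬ H.Adj u s1 := hSind u hu s1 hs1S
  have hnH03 : ¬ H.Adj u s2 := hSind u hu s2 hs2S
  have hnH06 : ¬ H.Adj u (f u) := fun h => (hfadj u hu (f u) hk3K).mp h rfl
  have hnH07 : ¬ H.Adj u r := fun h => hRS r hrR u hu h.symm
  have hnH12 : ¬ H.Adj w s1 := hw s1
  have hnH13 : ¬ H.Adj w s2 := hw s2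
  have hnH14 : ¬ H.Adj w (f s1) := hw (f s1)
  have hnH15 : ¬ H.Adj w (f s2) := hw (f s2)
  have hnH16 : ¬ H.Adj w (f u) := hw (f u)
  have hnH17 : ¬ H.Adj w r := hw r
  have hnH23 : ¬ H.Adj s1 s2 := hSind s1 hs1S s2 hs2S
  have hnH24 : ¬ H.Adj s1 (f s1) := fun h => (hfadj s1 hs1S (f s1) hk1K).mp h rfl
  have hnH27 : ¬ H.Adj s1 r := fun h => hRS r hrR s1 hs1S h.symm
  have hnH35 : ¬ H.Adj s2 (f s2) := fun h => (hfadj s2 hs2S (f s2) hk2K).mp h rfl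
  have hnH37 : ¬ H.Adj s2 r := fun h => hRS r hrR s2 hs2S h.symm
  have hKeq : K = {f u, f s1, f s2} := by
    rw [← hfbij.image_eq, hSeq, Set.image_insert_eq, Set.image_insert_eq, Set.image_singleton]
  have hcov : ∀ x : α, x = u ∨ x = w ∨ x = s1 ∨ x = s2 ∨ x = f s1 ∨ x = f s2 ∨ x = f u ∨ x = r := by
    intro x
    by_cases hxw : x = w
    · exact Or.inr (Or.inl hxw)
    · have hx : x ∈ S ∪ K ∪ R := by rw [hcover]; exact hxw
      rw [hSeq, hKeq, hReq] at hx
      simp only [Set.mem_union, Set.mem_insert_iff, Set.mem_singleton_iff] at hx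
      rcases hx with ((rfl | rfl | rfl) | (rfl | rfl | rfl)) | rfl
      exacts [Or.inl rfl, Or.inr (Or.inr (Or.inl rfl)), Or.inr (Or.inr (Or.inr (Or.inl rfl))), Or.inr (Or.inr (Or.inr (Or.inr (Or.inr (Or.inr (Or.inl rfl)))))), Or.inr (Or.inr (Or.inr (Or.inr (Or.inl rfl)))), Or.inr (Or.inr (Or.inr (Or.inr (Or.inr (Or.inl rfl))))), Or.inr (Or.inr (Or.inr (Or.inr (Or.inr (Or.inr (Or.inr (rfl)))))))]
  have hBadj : ∀ x y : α, (addTail H u w).Adj x y ↔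
      (H.Adj x y ∨ (x = u ∧ y = w) ∨ (x = w ∧ y = u)) := by
    intro x y
    rw [addTail, SimpleGraph.sup_adj, SimpleGraph.fromEdgeSet_adj]
    simp only [Set.mem_singleton_iff, Sym2.eq_iff]
    constructor
    · rintro (h | ⟨h1 | h1, -⟩)
      · exact Or.inl h
      · exact Or.inr (Or.inl h1)
      · exact Or.inr (Or.inr h1)
    · rintro (h | ⟨rfl, rfl⟩ | ⟨rfl, rfl⟩)
      · exact Or.inl h
      · exact Or.inr ⟨Or.inl ⟨rfl, rfl⟩, hne01⟩
      · exact Or.inr ⟨Or.inr ⟨rfl, rfl⟩, hne01.symm⟩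
  have hb01 : (addTail H u w).Adj u w := (hBadj u w).mpr (Or.inr (Or.inl ⟨rfl, rfl⟩))
  have hb04 : (addTail H u w).Adj u (f s1) := (hBadj u (f s1)).mpr (Or.inl hH04)
  have hb05 : (addTail H u w).Adj u (f s2) := (hBadj u (f s2)).mpr (Or.inl hH05)
  have hb25 : (addTail H u w).Adj s1 (f s2) := (hBadj s1 (f s2)).mpr (Or.inl hH25)
  have hb26 : (addTail H u w).Adj s1 (f u) := (hBadj s1 (f u)).mpr (Or.inl hH26)
  have hb34 : (addTail H u w).Adj s2 (f s1) := (hBadj s2 (f s1)).mpr (Or.inl hH34)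
  have hb36 : (addTail H u w).Adj s2 (f u) := (hBadj s2 (f u)).mpr (Or.inl hH36)
  have hb45 : (addTail H u w).Adj (f s1) (f s2) := (hBadj (f s1) (f s2)).mpr (Or.inl hH45)
  have hb46 : (addTail H u w).Adj (f s1) (f u) := (hBadj (f s1) (f u)).mpr (Or.inl hH46)
  have hb47 : (addTail H u w).Adj (f s1) r := (hBadj (f s1) r).mpr (Or.inl hH47)
  have hb56 : (addTail H u w).Adj (f s2) (f u) := (hBadj (f s2) (f u)).mpr (Or.inl hH56)
  have hb57 : (addTail H u w).Adj (f s2) r := (hBadj (f s2) r).mpr (Or.inl hH57)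
  have hb67 : (addTail H u w).Adj (f u) r := (hBadj (f u) r).mpr (Or.inl hH67)
  have hnb02 : ¬ (addTail H u w).Adj u s1 := by
    rw [hBadj]; rintro (h | ⟨h1, h2⟩ | ⟨h1, h2⟩); exacts [hnH02 h, hne12 h2.symm, hne01 h1]
  have hnb03 : ¬ (addTail H u w).Adj u s2 := by
    rw [hBadj]; rintro (h | ⟨h1, h2⟩ | ⟨h1, h2⟩); exacts [hnH03 h, hne13 h2.symm, hne01 h1]
  have hnb06 : ¬ (addTail H u w).Adj u (f u) := by
    rw [hBadj]; rintro (h | ⟨h1, h2⟩ | ⟨h1, h2⟩); exacts [hnH06 h, hne16 h2.symm, hne01 h1]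
  have hnb07 : ¬ (addTail H u w).Adj u r := by
    rw [hBadj]; rintro (h | ⟨h1, h2⟩ | ⟨h1, h2⟩); exacts [hnH07 h, hne17 h2.symm, hne01 h1]
  have hnb12 : ¬ (addTail H u w).Adj w s1 := by
    rw [hBadj]; rintro (h | ⟨h1, h2⟩ | ⟨h1, h2⟩); exacts [hnH12 h, hne01 h1.symm, hne02 h2.symm]
  have hnb13 : ¬ (addTail H u w).Adj w s2 := by
    rw [hBadj]; rintro (h | ⟨h1, h2⟩ | ⟨h1, h2⟩); exacts [hnH13 h, hne01 h1.symm, hne03 h2.symm]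
  have hnb14 : ¬ (addTail H u w).Adj w (f s1) := by
    rw [hBadj]; rintro (h | ⟨h1, h2⟩ | ⟨h1, h2⟩); exacts [hnH14 h, hne01 h1.symm, hne04 h2.symm]
  have hnb15 : ¬ (addTail H u w).Adj w (f s2) := by
    rw [hBadj]; rintro (h | ⟨h1, h2⟩ | ⟨h1, h2⟩); exacts [hnH15 h, hne01 h1.symm, hne05 h2.symm]
  have hnb16 : ¬ (addTail H u w).Adj w (f u) := by
    rw [hBadj]; rintro (h | ⟨h1, h2⟩ | ⟨h1, h2⟩); exacts [hnH16 h, hne01 h1.symm, hne06 h2.symm]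
  have hnb17 : ¬ (addTail H u w).Adj w r := by
    rw [hBadj]; rintro (h | ⟨h1, h2⟩ | ⟨h1, h2⟩); exacts [hnH17 h, hne01 h1.symm, hne07 h2.symm]
  have hnb23 : ¬ (addTail H u w).Adj s1 s2 := by
    rw [hBadj]; rintro (h | ⟨h1, h2⟩ | ⟨h1, h2⟩); exacts [hnH23 h, hne02 h1.symm, hne12 h1.symm]
  have hnb24 : ¬ (addTail H u w).Adj s1 (f s1) := by
    rw [hBadj]; rintro (h | ⟨h1, h2⟩ | ⟨h1, h2⟩); exacts [hnH24 h, hne02 h1.symm, hne12 h1.symm]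
  have hnb27 : ¬ (addTail H u w).Adj s1 r := by
    rw [hBadj]; rintro (h | ⟨h1, h2⟩ | ⟨h1, h2⟩); exacts [hnH27 h, hne02 h1.symm, hne12 h1.symm]
  have hnb35 : ¬ (addTail H u w).Adj s2 (f s2) := by
    rw [hBadj]; rintro (h | ⟨h1, h2⟩ | ⟨h1, h2⟩); exacts [hnH35 h, hne03 h1.symm, hne13 h1.symm]
  have hnb37 : ¬ (addTail H u w).Adj s2 r := by
    rw [hBadj]; rintro (h | ⟨h1, h2⟩ | ⟨h1, h2⟩); exacts [hnH37 h, hne03 h1.symm, hne13 h1.symm]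
  rw [hK3]
  refine ⟨⟨?_, ?_⟩, rfl⟩
  · -- membership: the completion with fill edges u-k3, u-r, w-k3
    have hGcAdj : ∀ x y : α, (addTail H u w ⊔ SimpleGraph.fromEdgeSet {s(u, f u), s(u, r), s(w, f u)}).Adj x y ↔
        ((addTail H u w).Adj x y ∨ ((x = u ∧ y = f u) ∨ (x = f u ∧ y = u) ∨ (x = u ∧ y = r) ∨
          (x = r ∧ y = u) ∨ (x = w ∧ y = f u) ∨ (x = f u ∧ y = w))) := by
      intro x y
      rw [SimpleGraph.sup_adj, SimpleGraph.fromEdgeSet_adj]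
      simp only [Set.mem_insert_iff, Set.mem_singleton_iff, Sym2.eq_iff]
      constructor
      · rintro (h | ⟨hm, -⟩)
        · exact Or.inl h
        · rcases hm with (h | h) | (h | h) | (h | h)
          exacts [Or.inr (Or.inl h), Or.inr (Or.inr (Or.inl h)),
            Or.inr (Or.inr (Or.inr (Or.inl h))), Or.inr (Or.inr (Or.inr (Or.inr (Or.inl h)))),
            Or.inr (Or.inr (Or.inr (Or.inr (Or.inr (Or.inl h))))),
            Or.inr (Or.inr (Or.inr (Or.inr (Or.inr (Or.inr h)))))]
      · rintro (h | hm)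
        · exact Or.inl h
        · rcases hm with ⟨rfl, rfl⟩ | ⟨rfl, rfl⟩ | ⟨rfl, rfl⟩ | ⟨rfl, rfl⟩ | ⟨rfl, rfl⟩ | ⟨rfl, rfl⟩
          exacts [Or.inr ⟨Or.inl (Or.inl ⟨rfl, rfl⟩), hne06⟩,
            Or.inr ⟨Or.inl (Or.inr ⟨rfl, rfl⟩), hne06.symm⟩,
            Or.inr ⟨Or.inr (Or.inl (Or.inl ⟨rfl, rfl⟩)), hne07⟩,
            Or.inr ⟨Or.inr (Or.inl (Or.inr ⟨rfl, rfl⟩)), hne07.symm⟩,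
            Or.inr ⟨Or.inr (Or.inr (Or.inl ⟨rfl, rfl⟩)), hne16⟩,
            Or.inr ⟨Or.inr (Or.inr (Or.inr ⟨rfl, rfl⟩)), hne16.symm⟩]
    have hGadj : ∀ i j : V8, (addTail H u w ⊔ SimpleGraph.fromEdgeSet {s(u, f u), s(u, r), s(w, f u)}).Adj (vmap u w s1 s2 (f s1) (f s2) (f u) r i) (vmap u w s1 s2 (f s1) (f s2) (f u) r j) ↔ V8.Gup.Adj i j := by
      intro i j
      cases i <;> cases j
      exacts [(iff_of_false (SimpleGraph.irrefl _) (by decide)),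
    (iff_of_true ((hGcAdj u w).mpr (Or.inl hb01)) (by decide)),
    (iff_of_false (fun hadj => by rcases (hGcAdj u s1).mp hadj with hB | ⟨h1, h2⟩ | ⟨h1, h2⟩ | ⟨h1, h2⟩ | ⟨h1, h2⟩ | ⟨h1, h2⟩ | ⟨h1, h2⟩; exacts [hnb02 hB, hne26 h2, hne06 h1, hne27 h2, hne07 h1, hne01 h1, hne06 h1]) (by decide)),
    (iff_of_false (fun hadj => by rcases (hGcAdj u s2).mp hadj with hB | ⟨h1, h2⟩ | ⟨h1, h2⟩ | ⟨h1, h2⟩ | ⟨h1, h2⟩ | ⟨h1, h2⟩ | ⟨h1, h2⟩; exacts [hnb03 hB, hne36 h2, hne06 h1, hne37 h2, hne07 h1, hne01 h1, hne06 h1]) (by decide)),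
    (iff_of_true ((hGcAdj u (f s1)).mpr (Or.inl hb04)) (by decide)),
    (iff_of_true ((hGcAdj u (f s2)).mpr (Or.inl hb05)) (by decide)),
    (iff_of_true ((hGcAdj u (f u)).mpr (Or.inr (Or.inl ⟨rfl, rfl⟩))) (by decide)),
    (iff_of_true ((hGcAdj u r).mpr (Or.inr (Or.inr (Or.inr (Or.inl ⟨rfl, rfl⟩))))) (by decide)),
    (iff_of_true ((hGcAdj w u).mpr (Or.inl hb01.symm)) (by decide)),
    (iff_of_false (SimpleGraph.irrefl _) (by decide)),
    (iff_of_false (fun hadj => by rcases (hGcAdj w s1).mp hadj with hB | ⟨h1, h2⟩ | ⟨h1, h2⟩ | ⟨h1, h2⟩ | ⟨h1, h2⟩ | ⟨h1, h2⟩ | ⟨h1, h2⟩; exacts [hnb12 hB, hne01 h1.symm, hne16 h1, hne01 h1.symm, hne17 h1, hne26 h2, hne16 h1]) (by decide)),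
    (iff_of_false (fun hadj => by rcases (hGcAdj w s2).mp hadj with hB | ⟨h1, h2⟩ | ⟨h1, h2⟩ | ⟨h1, h2⟩ | ⟨h1, h2⟩ | ⟨h1, h2⟩ | ⟨h1, h2⟩; exacts [hnb13 hB, hne01 h1.symm, hne16 h1, hne01 h1.symm, hne17 h1, hne36 h2, hne16 h1]) (by decide)),
    (iff_of_false (fun hadj => by rcases (hGcAdj w (f s1)).mp hadj with hB | ⟨h1, h2⟩ | ⟨h1, h2⟩ | ⟨h1, h2⟩ | ⟨h1, h2⟩ | ⟨h1, h2⟩ | ⟨h1, h2⟩; exacts [hnb14 hB, hne01 h1.symm, hne16 h1, hne01 h1.symm, hne17 h1, hne46 h2, hne16 h1]) (by decide)),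
    (iff_of_false (fun hadj => by rcases (hGcAdj w (f s2)).mp hadj with hB | ⟨h1, h2⟩ | ⟨h1, h2⟩ | ⟨h1, h2⟩ | ⟨h1, h2⟩ | ⟨h1, h2⟩ | ⟨h1, h2⟩; exacts [hnb15 hB, hne01 h1.symm, hne16 h1, hne01 h1.symm, hne17 h1, hne56 h2, hne16 h1]) (by decide)),
    (iff_of_true ((hGcAdj w (f u)).mpr (Or.inr (Or.inr (Or.inr (Or.inr (Or.inr (Or.inl ⟨rfl, rfl⟩))))))) (by decide)),
    (iff_of_false (fun hadj => by rcases (hGcAdj w r).mp hadj with hB | ⟨h1, h2⟩ | ⟨h1, h2⟩ | ⟨h1, h2⟩ | ⟨h1, h2⟩ | ⟨h1, h2⟩ | ⟨h1, h2⟩; exacts [hnb17 hB, hne01 h1.symm, hne16 h1, hne01 h1.symm, hne17 h1, hne67 h2.symm, hne16 h1]) (by decide)),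
    (iff_of_false (fun hadj => by rcases (hGcAdj s1 u).mp hadj with hB | ⟨h1, h2⟩ | ⟨h1, h2⟩ | ⟨h1, h2⟩ | ⟨h1, h2⟩ | ⟨h1, h2⟩ | ⟨h1, h2⟩; exacts [hnb02 hB.symm, hne02 h1.symm, hne26 h1, hne02 h1.symm, hne27 h1, hne12 h1.symm, hne26 h1]) (by decide)),
    (iff_of_false (fun hadj => by rcases (hGcAdj s1 w).mp hadj with hB | ⟨h1, h2⟩ | ⟨h1, h2⟩ | ⟨h1, h2⟩ | ⟨h1, h2⟩ | ⟨h1, h2⟩ | ⟨h1, h2⟩; exacts [hnb12 hB.symm, hne02 h1.symm, hne26 h1, hne02 h1.symm, hne27 h1, hne12 h1.symm, hne26 h1]) (by decide)),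
    (iff_of_false (SimpleGraph.irrefl _) (by decide)),
    (iff_of_false (fun hadj => by rcases (hGcAdj s1 s2).mp hadj with hB | ⟨h1, h2⟩ | ⟨h1, h2⟩ | ⟨h1, h2⟩ | ⟨h1, h2⟩ | ⟨h1, h2⟩ | ⟨h1, h2⟩; exacts [hnb23 hB, hne02 h1.symm, hne26 h1, hne02 h1.symm, hne27 h1, hne12 h1.symm, hne26 h1]) (by decide)),
    (iff_of_false (fun hadj => by rcases (hGcAdj s1 (f s1)).mp hadj with hB | ⟨h1, h2⟩ | ⟨h1, h2⟩ | ⟨h1, h2⟩ | ⟨h1, h2⟩ | ⟨h1, h2⟩ | ⟨h1, h2⟩; exacts [hnb24 hB, hne02 h1.symm, hne26 h1, hne02 h1.symm, hne27 h1, hne12 h1.symm, hne26 h1]) (by decide)),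
    (iff_of_true ((hGcAdj s1 (f s2)).mpr (Or.inl hb25)) (by decide)),
    (iff_of_true ((hGcAdj s1 (f u)).mpr (Or.inl hb26)) (by decide)),
    (iff_of_false (fun hadj => by rcases (hGcAdj s1 r).mp hadj with hB | ⟨h1, h2⟩ | ⟨h1, h2⟩ | ⟨h1, h2⟩ | ⟨h1, h2⟩ | ⟨h1, h2⟩ | ⟨h1, h2⟩; exacts [hnb27 hB, hne02 h1.symm, hne26 h1, hne02 h1.symm, hne27 h1, hne12 h1.symm, hne26 h1]) (by decide)),
    (iff_of_false (fun hadj => by rcases (hGcAdj s2 u).mp hadj with hB | ⟨h1, h2⟩ | ⟨h1, h2⟩ | ⟨h1, h2⟩ | ⟨h1, h2⟩ | ⟨h1, h2⟩ | ⟨h1, h2⟩; exacts [hnb03 hB.symm, hne03 h1.symm, hne36 h1, hne03 h1.symm, hne37 h1, hne13 h1.symm, hne36 h1]) (by decide)),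
    (iff_of_false (fun hadj => by rcases (hGcAdj s2 w).mp hadj with hB | ⟨h1, h2⟩ | ⟨h1, h2⟩ | ⟨h1, h2⟩ | ⟨h1, h2⟩ | ⟨h1, h2⟩ | ⟨h1, h2⟩; exacts [hnb13 hB.symm, hne03 h1.symm, hne36 h1, hne03 h1.symm, hne37 h1, hne13 h1.symm, hne36 h1]) (by decide)),
    (iff_of_false (fun hadj => by rcases (hGcAdj s2 s1).mp hadj with hB | ⟨h1, h2⟩ | ⟨h1, h2⟩ | ⟨h1, h2⟩ | ⟨h1, h2⟩ | ⟨h1, h2⟩ | ⟨h1, h2⟩; exacts [hnb23 hB.symm, hne03 h1.symm, hne36 h1, hne03 h1.symm, hne37 h1, hne13 h1.symm, hne36 h1]) (by decide)),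
    (iff_of_false (SimpleGraph.irrefl _) (by decide)),
    (iff_of_true ((hGcAdj s2 (f s1)).mpr (Or.inl hb34)) (by decide)),
    (iff_of_false (fun hadj => by rcases (hGcAdj s2 (f s2)).mp hadj with hB | ⟨h1, h2⟩ | ⟨h1, h2⟩ | ⟨h1, h2⟩ | ⟨h1, h2⟩ | ⟨h1, h2⟩ | ⟨h1, h2⟩; exacts [hnb35 hB, hne03 h1.symm, hne36 h1, hne03 h1.symm, hne37 h1, hne13 h1.symm, hne36 h1]) (by decide)),
    (iff_of_true ((hGcAdj s2 (f u)).mpr (Or.inl hb36)) (by decide)),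
    (iff_of_false (fun hadj => by rcases (hGcAdj s2 r).mp hadj with hB | ⟨h1, h2⟩ | ⟨h1, h2⟩ | ⟨h1, h2⟩ | ⟨h1, h2⟩ | ⟨h1, h2⟩ | ⟨h1, h2⟩; exacts [hnb37 hB, hne03 h1.symm, hne36 h1, hne03 h1.symm, hne37 h1, hne13 h1.symm, hne36 h1]) (by decide)),
    (iff_of_true ((hGcAdj (f s1) u).mpr (Or.inl hb04.symm)) (by decide)),
    (iff_of_false (fun hadj => by rcases (hGcAdj (f s1) w).mp hadj with hB | ⟨h1, h2⟩ | ⟨h1, h2⟩ | ⟨h1, h2⟩ | ⟨h1, h2⟩ | ⟨h1, h2⟩ | ⟨h1, h2⟩; exacts [hnb14 hB.symm, hne04 h1.symm, hne46 h1, hne04 h1.symm, hne47 h1, hne14 h1.symm, hne46 h1]) (by decide)),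
    (iff_of_false (fun hadj => by rcases (hGcAdj (f s1) s1).mp hadj with hB | ⟨h1, h2⟩ | ⟨h1, h2⟩ | ⟨h1, h2⟩ | ⟨h1, h2⟩ | ⟨h1, h2⟩ | ⟨h1, h2⟩; exacts [hnb24 hB.symm, hne04 h1.symm, hne46 h1, hne04 h1.symm, hne47 h1, hne14 h1.symm, hne46 h1]) (by decide)),
    (iff_of_true ((hGcAdj (f s1) s2).mpr (Or.inl hb34.symm)) (by decide)),
    (iff_of_false (SimpleGraph.irrefl _) (by decide)),
    (iff_of_true ((hGcAdj (f s1) (f s2)).mpr (Or.inl hb45)) (by decide)),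
    (iff_of_true ((hGcAdj (f s1) (f u)).mpr (Or.inl hb46)) (by decide)),
    (iff_of_true ((hGcAdj (f s1) r).mpr (Or.inl hb47)) (by decide)),
    (iff_of_true ((hGcAdj (f s2) u).mpr (Or.inl hb05.symm)) (by decide)),
    (iff_of_false (fun hadj => by rcases (hGcAdj (f s2) w).mp hadj with hB | ⟨h1, h2⟩ | ⟨h1, h2⟩ | ⟨h1, h2⟩ | ⟨h1, h2⟩ | ⟨h1, h2⟩ | ⟨h1, h2⟩; exacts [hnb15 hB.symm, hne05 h1.symm, hne56 h1, hne05 h1.symm, hne57 h1, hne15 h1.symm, hne56 h1]) (by decide)),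
    (iff_of_true ((hGcAdj (f s2) s1).mpr (Or.inl hb25.symm)) (by decide)),
    (iff_of_false (fun hadj => by rcases (hGcAdj (f s2) s2).mp hadj with hB | ⟨h1, h2⟩ | ⟨h1, h2⟩ | ⟨h1, h2⟩ | ⟨h1, h2⟩ | ⟨h1, h2⟩ | ⟨h1, h2⟩; exacts [hnb35 hB.symm, hne05 h1.symm, hne56 h1, hne05 h1.symm, hne57 h1, hne15 h1.symm, hne56 h1]) (by decide)),
    (iff_of_true ((hGcAdj (f s2) (f s1)).mpr (Or.inl hb45.symm)) (by decide)),
    (iff_of_false (SimpleGraph.irrefl _) (by decide)),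
    (iff_of_true ((hGcAdj (f s2) (f u)).mpr (Or.inl hb56)) (by decide)),
    (iff_of_true ((hGcAdj (f s2) r).mpr (Or.inl hb57)) (by decide)),
    (iff_of_true ((hGcAdj (f u) u).mpr (Or.inr (Or.inr (Or.inl ⟨rfl, rfl⟩)))) (by decide)),
    (iff_of_true ((hGcAdj (f u) w).mpr (Or.inr (Or.inr (Or.inr (Or.inr (Or.inr (Or.inr (⟨rfl, rfl⟩)))))))) (by decide)),
    (iff_of_true ((hGcAdj (f u) s1).mpr (Or.inl hb26.symm)) (by decide)),
    (iff_of_true ((hGcAdj (f u) s2).mpr (Or.inl hb36.symm)) (by decide)),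
    (iff_of_true ((hGcAdj (f u) (f s1)).mpr (Or.inl hb46.symm)) (by decide)),
    (iff_of_true ((hGcAdj (f u) (f s2)).mpr (Or.inl hb56.symm)) (by decide)),
    (iff_of_false (SimpleGraph.irrefl _) (by decide)),
    (iff_of_true ((hGcAdj (f u) r).mpr (Or.inl hb67)) (by decide)),
    (iff_of_true ((hGcAdj r u).mpr (Or.inr (Or.inr (Or.inr (Or.inr (Or.inl ⟨rfl, rfl⟩)))))) (by decide)),
    (iff_of_false (fun hadj => by rcases (hGcAdj r w).mp hadj with hB | ⟨h1, h2⟩ | ⟨h1, h2⟩ | ⟨h1, h2⟩ | ⟨h1, h2⟩ | ⟨h1, h2⟩ | ⟨h1, h2⟩; exacts [hnb17 hB.symm, hne07 h1.symm, hne67 h1.symm, hne07 h1.symm, hne01 h2.symm, hne17 h1.symm, hne67 h1.symm]) (by decide)),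
    (iff_of_false (fun hadj => by rcases (hGcAdj r s1).mp hadj with hB | ⟨h1, h2⟩ | ⟨h1, h2⟩ | ⟨h1, h2⟩ | ⟨h1, h2⟩ | ⟨h1, h2⟩ | ⟨h1, h2⟩; exacts [hnb27 hB.symm, hne07 h1.symm, hne67 h1.symm, hne07 h1.symm, hne02 h2.symm, hne17 h1.symm, hne67 h1.symm]) (by decide)),
    (iff_of_false (fun hadj => by rcases (hGcAdj r s2).mp hadj with hB | ⟨h1, h2⟩ | ⟨h1, h2⟩ | ⟨h1, h2⟩ | ⟨h1, h2⟩ | ⟨h1, h2⟩ | ⟨h1, h2⟩; exacts [hnb37 hB.symm, hne07 h1.symm, hne67 h1.symm, hne07 h1.symm, hne03 h2.symm, hne17 h1.symm, hne67 h1.symm]) (by decide)),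
    (iff_of_true ((hGcAdj r (f s1)).mpr (Or.inl hb47.symm)) (by decide)),
    (iff_of_true ((hGcAdj r (f s2)).mpr (Or.inl hb57.symm)) (by decide)),
    (iff_of_true ((hGcAdj r (f u)).mpr (Or.inl hb67.symm)) (by decide)),
    (iff_of_false (SimpleGraph.irrefl _) (by decide))]
    have hidx : ∀ x : α, ∃ i : V8, x = vmap u w s1 s2 (f s1) (f s2) (f u) r i := by
      intro x
      rcases hcov x with rfl | rfl | rfl | rfl | rfl | rfl | rfl | rfl
      exacts [⟨V8.x0, rfl⟩, ⟨V8.x1, rfl⟩, ⟨V8.x2, rfl⟩, ⟨V8.x3, rfl⟩, ⟨V8.x4, rfl⟩, ⟨V8.x5, rfl⟩, ⟨V8.x6, rfl⟩, ⟨V8.x7, rfl⟩]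
    have hsparse : IsP4Sparse (addTail H u w ⊔ SimpleGraph.fromEdgeSet {s(u, f u), s(u, r), s(w, f u)}) := by
      intro s hs5 t1 ht1s t2 ht2s hq1 hq2
      obtain ⟨a, b, c, d, ht1, hP1⟩ := hq1
      obtain ⟨a', b', c', d', ht2, hP2⟩ := hq2
      obtain ⟨hnab, hnac, hnad, hnbc, hnbd, hncd, hab, hbc, hcd, nac, nad, nbd⟩ := hP1
      obtain ⟨hnab', hnac', hnad', hnbc', hnbd', hncd', hab', hbc', hcd', nac', nad', nbd'⟩ := hP2
      obtain ⟨ia, ha⟩ := hidx a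
      obtain ⟨ib, hb⟩ := hidx b
      obtain ⟨ic, hc⟩ := hidx c
      obtain ⟨id, hd⟩ := hidx d
      obtain ⟨ia', ha'⟩ := hidx a'
      obtain ⟨ib', hb'⟩ := hidx b'
      obtain ⟨ic', hc'⟩ := hidx c'
      obtain ⟨id', hd'⟩ := hidx d'
      have hc1 := V8.classify ia ib ic id ⟨(fun e => hnab (by rw [ha, hb, e])), (fun e => hnac (by rw [ha, hc, e])), (fun e => hnad (by rw [ha, hd, e])), (fun e => hnbc (by rw [hb, hc, e])), (fun e => hnbd (by rw [hb, hd, e])), (fun e => hncd (by rw [hc, hd, e])), ((hGadj ia ib).mp (by rw [← ha, ← hb]; exact hab)), ((hGadj ib ic).mp (by rw [← hb, ← hc]; exact hbc)), ((hGadj ic id).mp (by rw [← hc, ← hd]; exact hcd)), (fun hh => nac (by rw [ha, hc]; exact (hGadj ia ic).mpr hh)), (fun hh => nad (by rw [ha, hd]; exact (hGadj ia id).mpr hh)), (fun hh => nbd (by rw [hb, hd]; exact (hGadj ib id).mpr hh))⟩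
      have hc2 := V8.classify ia' ib' ic' id' ⟨(fun e => hnab' (by rw [ha', hb', e])), (fun e => hnac' (by rw [ha', hc', e])), (fun e => hnad' (by rw [ha', hd', e])), (fun e => hnbc' (by rw [hb', hc', e])), (fun e => hnbd' (by rw [hb', hd', e])), (fun e => hncd' (by rw [hc', hd', e])), ((hGadj ia' ib').mp (by rw [← ha', ← hb']; exact hab')), ((hGadj ib' ic').mp (by rw [← hb', ← hc']; exact hbc')), ((hGadj ic' id').mp (by rw [← hc', ← hd']; exact hcd')), (fun hh => nac' (by rw [ha', hc']; exact (hGadj ia' ic').mpr hh)), (fun hh => nad' (by rw [ha', hd']; exact (hGadj ia' id').mpr hh)), (fun hh => nbd' (by rw [hb', hd']; exact (hGadj ib' id').mpr hh))⟩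
      have key1 : ∀ T : Finset V8, ({ia, ib, ic, id} : Finset V8) = T →
          ({a, b, c, d} : Set α) = (vmap u w s1 s2 (f s1) (f s2) (f u) r) '' ↑T := by
        intro T hT
        rw [← hT]
        simp only [Finset.coe_insert, Finset.coe_singleton, Set.image_insert_eq,
          Set.image_singleton, ← ha, ← hb, ← hc, ← hd]
      have key2 : ∀ T : Finset V8, ({ia', ib', ic', id'} : Finset V8) = T →
          ({a', b', c', d'} : Set α) = (vmap u w s1 s2 (f s1) (f s2) (f u) r) '' ↑T := by
        intro T hT
        rw [← hT]
        simp only [Finset.coe_insert, Finset.coe_singleton, Set.image_insert_eq,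
          Set.image_singleton, ← ha', ← hb', ← hc', ← hd']
      rcases hc1 with hT1 | hT1 | hT1
      · rcases hc2 with hT2 | hT2 | hT2
        ·
          have e1 := key1 _ hT1
          have e2 := key2 _ hT2
          simp only [Finset.coe_insert, Finset.coe_singleton, Set.image_insert_eq,
            Set.image_singleton, vmap] at e1 e2
          rw [ht1, ht2, e1, e2]
        ·
          have e1 := key1 _ hT1
          have e2 := key2 _ hT2
          simp only [Finset.coe_insert, Finset.coe_singleton, Set.image_insert_eq,
            Set.image_singleton, vmap] at e1 e2
          exact absurd hs5 (fun hs5 => not_six (Set.toFinite s) hs5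
            (ht1s (by rw [ht1, e1]; simp)) (ht1s (by rw [ht1, e1]; simp)) (ht1s (by rw [ht1, e1]; simp)) (ht1s (by rw [ht1, e1]; simp)) (ht2s (by rw [ht2, e2]; simp)) (ht2s (by rw [ht2, e2]; simp))
            hne01.symm hne14 hne13 hne12 hne15 hne04 hne03 hne02 hne05 hne34.symm hne24.symm hne45 hne23.symm hne35 hne25)
        ·
          have e1 := key1 _ hT1
          have e2 := key2 _ hT2
          simp only [Finset.coe_insert, Finset.coe_singleton, Set.image_insert_eq,
            Set.image_singleton, vmap] at e1 e2
          exact absurd hs5 (fun hs5 => not_six (Set.toFinite s) hs5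
            (ht1s (by rw [ht1, e1]; simp)) (ht1s (by rw [ht1, e1]; simp)) (ht1s (by rw [ht1, e1]; simp)) (ht1s (by rw [ht1, e1]; simp)) (ht2s (by rw [ht2, e2]; simp)) (ht2s (by rw [ht2, e2]; simp))
            hne01.symm hne14 hne13 hne15 hne12 hne04 hne03 hne05 hne02 hne34.symm hne45 hne24.symm hne35 hne23.symm hne25.symm)
      · rcases hc2 with hT2 | hT2 | hT2
        ·
          have e1 := key1 _ hT1
          have e2 := key2 _ hT2
          simp only [Finset.coe_insert, Finset.coe_singleton, Set.image_insert_eq,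
            Set.image_singleton, vmap] at e1 e2
          exact absurd hs5 (fun hs5 => not_six (Set.toFinite s) hs5
            (ht1s (by rw [ht1, e1]; simp)) (ht1s (by rw [ht1, e1]; simp)) (ht1s (by rw [ht1, e1]; simp)) (ht1s (by rw [ht1, e1]; simp)) (ht2s (by rw [ht2, e2]; simp)) (ht2s (by rw [ht2, e2]; simp))
            hne25 hne24 hne23 hne12.symm hne02.symm hne45.symm hne35.symm hne15.symm hne05.symm hne34.symm hne14.symm hne04.symm hne13.symm hne03.symm hne01.symm)
        ·
          have e1 := key1 _ hT1
          have e2 := key2 _ hT2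
          simp only [Finset.coe_insert, Finset.coe_singleton, Set.image_insert_eq,
            Set.image_singleton, vmap] at e1 e2
          rw [ht1, ht2, e1, e2]
        ·
          have e1 := key1 _ hT1
          have e2 := key2 _ hT2
          simp only [Finset.coe_insert, Finset.coe_singleton, Set.image_insert_eq,
            Set.image_singleton, vmap] at e1 e2
          exact absurd hs5 (fun hs5 => not_six (Set.toFinite s) hs5
            (ht1s (by rw [ht1, e1]; simp)) (ht1s (by rw [ht1, e1]; simp)) (ht1s (by rw [ht1, e1]; simp)) (ht1s (by rw [ht1, e1]; simp)) (ht2s (by rw [ht2, e2]; simp)) (ht2s (by rw [ht2, e2]; simp))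
            hne25 hne24 hne23 hne12.symm hne02.symm hne45.symm hne35.symm hne15.symm hne05.symm hne34.symm hne14.symm hne04.symm hne13.symm hne03.symm hne01.symm)
      · rcases hc2 with hT2 | hT2 | hT2
        ·
          have e1 := key1 _ hT1
          have e2 := key2 _ hT2
          simp only [Finset.coe_insert, Finset.coe_singleton, Set.image_insert_eq,
            Set.image_singleton, vmap] at e1 e2
          exact absurd hs5 (fun hs5 => not_six (Set.toFinite s) hs5
            (ht1s (by rw [ht1, e1]; simp)) (ht1s (by rw [ht1, e1]; simp)) (ht1s (by rw [ht1, e1]; simp)) (ht1s (by rw [ht1, e1]; simp)) (ht2s (by rw [ht2, e2]; simp)) (ht2s (by rw [ht2, e2]; simp))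
            hne01.symm hne15 hne12 hne14 hne13 hne05 hne02 hne04 hne03 hne25.symm hne45.symm hne35.symm hne24 hne23 hne34.symm)
        ·
          have e1 := key1 _ hT1
          have e2 := key2 _ hT2
          simp only [Finset.coe_insert, Finset.coe_singleton, Set.image_insert_eq,
            Set.image_singleton, vmap] at e1 e2
          exact absurd hs5 (fun hs5 => not_six (Set.toFinite s) hs5
            (ht1s (by rw [ht1, e1]; simp)) (ht1s (by rw [ht1, e1]; simp)) (ht1s (by rw [ht1, e1]; simp)) (ht1s (by rw [ht1, e1]; simp)) (ht2s (by rw [ht2, e2]; simp)) (ht2s (by rw [ht2, e2]; simp))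
            hne01.symm hne15 hne12 hne14 hne13 hne05 hne02 hne04 hne03 hne25.symm hne45.symm hne35.symm hne24 hne23 hne34.symm)
        ·
          have e1 := key1 _ hT1
          have e2 := key2 _ hT2
          simp only [Finset.coe_insert, Finset.coe_singleton, Set.image_insert_eq,
            Set.image_singleton, vmap] at e1 e2
          rw [ht1, ht2, e1, e2]
    have hfc : fillCount (addTail H u w) (addTail H u w ⊔ SimpleGraph.fromEdgeSet {s(u, f u), s(u, r), s(w, f u)}) = 3 := by
      have hset : (addTail H u w ⊔ SimpleGraph.fromEdgeSet {s(u, f u), s(u, r), s(w, f u)}).edgeSet \ (addTail H u w).edgeSet = {s(u, f u), s(u, r), s(w, f u)} := by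
        ext e
        constructor
        · rintro ⟨he, hne⟩
          rw [SimpleGraph.edgeSet_sup] at he
          rcases he with h | h
          · exact absurd h hne
          · rw [SimpleGraph.edgeSet_fromEdgeSet] at h
            exact h.1
        · intro he
          simp only [Set.mem_insert_iff, Set.mem_singleton_iff] at he
          rcases he with rfl | rfl | rfl
          · refine ⟨?_, fun hc => hnb06 (((addTail H u w)).mem_edgeSet.mp hc)⟩
            rw [SimpleGraph.edgeSet_sup, SimpleGraph.edgeSet_fromEdgeSet]
            exact Or.inr ⟨Set.mem_insert _ _, by simp only [Set.mem_setOf_eq, Sym2.mem_diagSet, Sym2.mk_isDiag_iff]; exact hne06⟩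
          · refine ⟨?_, fun hc => hnb07 (((addTail H u w)).mem_edgeSet.mp hc)⟩
            rw [SimpleGraph.edgeSet_sup, SimpleGraph.edgeSet_fromEdgeSet]
            exact Or.inr ⟨Set.mem_insert_of_mem _ (Set.mem_insert _ _), by simp only [Set.mem_setOf_eq, Sym2.mem_diagSet, Sym2.mk_isDiag_iff]; exact hne07⟩
          · refine ⟨?_, fun hc => hnb16 (((addTail H u w)).mem_edgeSet.mp hc)⟩
            rw [SimpleGraph.edgeSet_sup, SimpleGraph.edgeSet_fromEdgeSet]
            exact Or.inr ⟨Set.mem_insert_of_mem _ (Set.mem_insert_of_mem _ rfl), by simp only [Set.mem_setOf_eq, Sym2.mem_diagSet, Sym2.mk_isDiag_iff]; exact hne16⟩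
      rw [fillCount, hset]
      exact ncard3' (by intro hco; rw [Sym2.eq_iff] at hco; rcases hco with ⟨h1, h2⟩ | ⟨h1, h2⟩; exacts [hne67 h2, hne07 h1]) (by intro hco; rw [Sym2.eq_iff] at hco; rcases hco with ⟨h1, h2⟩ | ⟨h1, h2⟩; exacts [hne01 h1, hne06 h1]) (by intro hco; rw [Sym2.eq_iff] at hco; rcases hco with ⟨h1, h2⟩ | ⟨h1, h2⟩; exacts [hne01 h1, hne06 h1])
    exact ⟨(addTail H u w ⊔ SimpleGraph.fromEdgeSet {s(u, f u), s(u, r), s(w, f u)}), le_sup_left, hsparse, hfc⟩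
  · -- lower bound
    rintro n ⟨G', hle, hsp, rfl⟩
    rcases Classical.em (G'.Adj u (f u)) with hp06 | hn06
    ·
      rcases Classical.em (G'.Adj u s2) with hp03 | hn03
      ·
        rcases Classical.em (G'.Adj u r) with hp07 | hn07
        ·
          exact three_fills hp03 hp06 hp07 hnb03 hnb06 hnb07
            (by intro hco; rw [Sym2.eq_iff] at hco; rcases hco with ⟨h1, h2⟩ | ⟨h1, h2⟩; exacts [hne36 h2, hne06 h1]) (by intro hco; rw [Sym2.eq_iff] at hco; rcases hco with ⟨h1, h2⟩ | ⟨h1, h2⟩; exacts [hne37 h2, hne07 h1]) (by intro hco; rw [Sym2.eq_iff] at hco; rcases hco with ⟨h1, h2⟩ | ⟨h1, h2⟩; exacts [hne67 h2, hne07 h1])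
        ·
          rcases Classical.em (G'.Adj w (f s1)) with hp14 | hn14
          ·
            exact three_fills hp03 hp06 hp14 hnb03 hnb06 hnb14
              (by intro hco; rw [Sym2.eq_iff] at hco; rcases hco with ⟨h1, h2⟩ | ⟨h1, h2⟩; exacts [hne36 h2, hne06 h1]) (by intro hco; rw [Sym2.eq_iff] at hco; rcases hco with ⟨h1, h2⟩ | ⟨h1, h2⟩; exacts [hne01 h1, hne04 h1]) (by intro hco; rw [Sym2.eq_iff] at hco; rcases hco with ⟨h1, h2⟩ | ⟨h1, h2⟩; exacts [hne01 h1, hne04 h1])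
          ·
            rcases Classical.em (G'.Adj w (f s2)) with hp15 | hn15
            ·
              exact three_fills hp03 hp06 hp15 hnb03 hnb06 hnb15
                (by intro hco; rw [Sym2.eq_iff] at hco; rcases hco with ⟨h1, h2⟩ | ⟨h1, h2⟩; exacts [hne36 h2, hne06 h1]) (by intro hco; rw [Sym2.eq_iff] at hco; rcases hco with ⟨h1, h2⟩ | ⟨h1, h2⟩; exacts [hne01 h1, hne05 h1]) (by intro hco; rw [Sym2.eq_iff] at hco; rcases hco with ⟨h1, h2⟩ | ⟨h1, h2⟩; exacts [hne01 h1, hne05 h1])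
            ·
              rcases Classical.em (G'.Adj w r) with hp17 | hn17
              ·
                exact three_fills hp03 hp06 hp17 hnb03 hnb06 hnb17
                  (by intro hco; rw [Sym2.eq_iff] at hco; rcases hco with ⟨h1, h2⟩ | ⟨h1, h2⟩; exacts [hne36 h2, hne06 h1]) (by intro hco; rw [Sym2.eq_iff] at hco; rcases hco with ⟨h1, h2⟩ | ⟨h1, h2⟩; exacts [hne01 h1, hne07 h1]) (by intro hco; rw [Sym2.eq_iff] at hco; rcases hco with ⟨h1, h2⟩ | ⟨h1, h2⟩; exacts [hne01 h1, hne07 h1])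
              ·
                exfalso
                have heq : ({w, u, (f s1), r} : Set α) = ({w, u, (f s2), r} : Set α) :=
                  conflict5 hsp (hne01.symm) (hne14) (hne17) (hne15) (hne04) (hne07) (hne05) (hne47) (hne45) (hne57.symm)
                    (by intro x hx; simp only [Set.mem_insert_iff, Set.mem_singleton_iff] at hx ⊢; rcases hx with rfl | rfl | rfl | rfl; exacts [Or.inl rfl, Or.inr (Or.inl rfl), Or.inr (Or.inr (Or.inl rfl)), Or.inr (Or.inr (Or.inr (Or.inl rfl)))])
                    (by intro x hx; simp only [Set.mem_insert_iff, Set.mem_singleton_iff] at hx ⊢; rcases hx with rfl | rfl | rfl | rfl; exacts [Or.inl rfl, Or.inr (Or.inl rfl), Or.inr (Or.inr (Or.inr (Or.inr (rfl)))), Or.inr (Or.inr (Or.inr (Or.inl rfl)))])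
                    ⟨hne01.symm, hne14, hne17, hne04, hne07, hne47, (hle hb01).symm, (hle hb04), (hle hb47), hn14, hn17, hn07⟩
                    ⟨hne01.symm, hne15, hne17, hne05, hne07, hne57, (hle hb01).symm, (hle hb05), (hle hb57), hn15, hn17, hn07⟩
                have hvm : (f s1) ∈ ({w, u, (f s2), r} : Set α) := by rw [← heq]; simp
                simp only [Set.mem_insert_iff, Set.mem_singleton_iff] at hvm
                rcases hvm with h | h | h | h
                exacts [hne14 h.symm, hne04 h.symm, hne45 h, hne47 h]
      ·
        rcases Classical.em (G'.Adj w s2) with hp13 | hn13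
        ·
          rcases Classical.em (G'.Adj w (f s1)) with hp14 | hn14
          ·
            exact three_fills hp06 hp13 hp14 hnb06 hnb13 hnb14
              (by intro hco; rw [Sym2.eq_iff] at hco; rcases hco with ⟨h1, h2⟩ | ⟨h1, h2⟩; exacts [hne01 h1, hne03 h1]) (by intro hco; rw [Sym2.eq_iff] at hco; rcases hco with ⟨h1, h2⟩ | ⟨h1, h2⟩; exacts [hne01 h1, hne04 h1]) (by intro hco; rw [Sym2.eq_iff] at hco; rcases hco with ⟨h1, h2⟩ | ⟨h1, h2⟩; exacts [hne34 h2, hne14 h1])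
          ·
            rcases Classical.em (G'.Adj w (f s2)) with hp15 | hn15
            ·
              exact three_fills hp06 hp13 hp15 hnb06 hnb13 hnb15
                (by intro hco; rw [Sym2.eq_iff] at hco; rcases hco with ⟨h1, h2⟩ | ⟨h1, h2⟩; exacts [hne01 h1, hne03 h1]) (by intro hco; rw [Sym2.eq_iff] at hco; rcases hco with ⟨h1, h2⟩ | ⟨h1, h2⟩; exacts [hne01 h1, hne05 h1]) (by intro hco; rw [Sym2.eq_iff] at hco; rcases hco with ⟨h1, h2⟩ | ⟨h1, h2⟩; exacts [hne35 h2, hne15 h1])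
            ·
              rcases Classical.em (G'.Adj s2 (f s2)) with hp35 | hn35
              ·
                exact three_fills hp06 hp13 hp35 hnb06 hnb13 hnb35
                  (by intro hco; rw [Sym2.eq_iff] at hco; rcases hco with ⟨h1, h2⟩ | ⟨h1, h2⟩; exacts [hne01 h1, hne03 h1]) (by intro hco; rw [Sym2.eq_iff] at hco; rcases hco with ⟨h1, h2⟩ | ⟨h1, h2⟩; exacts [hne03 h1, hne05 h1]) (by intro hco; rw [Sym2.eq_iff] at hco; rcases hco with ⟨h1, h2⟩ | ⟨h1, h2⟩; exacts [hne13 h1, hne15 h1])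
              ·
                exfalso
                have heq : ({w, s2, (f s1), (f s2)} : Set α) = ({s2, w, u, (f s2)} : Set α) :=
                  conflict5 hsp (hne13) (hne14) (hne15) (hne01.symm) (hne34) (hne35) (hne03.symm) (hne45) (hne04.symm) (hne05.symm)
                    (by intro x hx; simp only [Set.mem_insert_iff, Set.mem_singleton_iff] at hx ⊢; rcases hx with rfl | rfl | rfl | rfl; exacts [Or.inl rfl, Or.inr (Or.inl rfl), Or.inr (Or.inr (Or.inl rfl)), Or.inr (Or.inr (Or.inr (Or.inl rfl)))])
                    (by intro x hx; simp only [Set.mem_insert_iff, Set.mem_singleton_iff] at hx ⊢; rcases hx with rfl | rfl | rfl | rfl; exacts [Or.inr (Or.inl rfl), Or.inl rfl, Or.inr (Or.inr (Or.inr (Or.inr (rfl)))), Or.inr (Or.inr (Or.inr (Or.inl rfl)))])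
                    ⟨hne13, hne14, hne15, hne34, hne35, hne45, hp13, (hle hb34), (hle hb45), hn14, hn15, hn35⟩
                    ⟨hne13.symm, hne03.symm, hne35, hne01.symm, hne15, hne05, hp13.symm, (hle hb01).symm, (hle hb05), (fun hh => hn03 hh.symm), hn35, hn15⟩
                have hvm : (f s1) ∈ ({s2, w, u, (f s2)} : Set α) := by rw [← heq]; simp
                simp only [Set.mem_insert_iff, Set.mem_singleton_iff] at hvm
                rcases hvm with h | h | h | h
                exacts [hne34 h.symm, hne14 h.symm, hne04 h.symm, hne45 h]
        ·
          rcases Classical.em (G'.Adj w (f s1)) with hp14 | hn14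
          ·
            rcases Classical.em (G'.Adj u s1) with hp02 | hn02
            ·
              exact three_fills hp02 hp06 hp14 hnb02 hnb06 hnb14
                (by intro hco; rw [Sym2.eq_iff] at hco; rcases hco with ⟨h1, h2⟩ | ⟨h1, h2⟩; exacts [hne26 h2, hne06 h1]) (by intro hco; rw [Sym2.eq_iff] at hco; rcases hco with ⟨h1, h2⟩ | ⟨h1, h2⟩; exacts [hne01 h1, hne04 h1]) (by intro hco; rw [Sym2.eq_iff] at hco; rcases hco with ⟨h1, h2⟩ | ⟨h1, h2⟩; exacts [hne01 h1, hne04 h1])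
            ·
              rcases Classical.em (G'.Adj w s1) with hp12 | hn12
              ·
                exact three_fills hp06 hp12 hp14 hnb06 hnb12 hnb14
                  (by intro hco; rw [Sym2.eq_iff] at hco; rcases hco with ⟨h1, h2⟩ | ⟨h1, h2⟩; exacts [hne01 h1, hne02 h1]) (by intro hco; rw [Sym2.eq_iff] at hco; rcases hco with ⟨h1, h2⟩ | ⟨h1, h2⟩; exacts [hne01 h1, hne04 h1]) (by intro hco; rw [Sym2.eq_iff] at hco; rcases hco with ⟨h1, h2⟩ | ⟨h1, h2⟩; exacts [hne24 h2, hne14 h1])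
              ·
                rcases Classical.em (G'.Adj w (f u)) with hp16 | hn16
                ·
                  exact three_fills hp06 hp14 hp16 hnb06 hnb14 hnb16
                    (by intro hco; rw [Sym2.eq_iff] at hco; rcases hco with ⟨h1, h2⟩ | ⟨h1, h2⟩; exacts [hne01 h1, hne04 h1]) (by intro hco; rw [Sym2.eq_iff] at hco; rcases hco with ⟨h1, h2⟩ | ⟨h1, h2⟩; exacts [hne01 h1, hne06 h1]) (by intro hco; rw [Sym2.eq_iff] at hco; rcases hco with ⟨h1, h2⟩ | ⟨h1, h2⟩; exacts [hne46 h2, hne16 h1])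
                ·
                  exfalso
                  have heq : ({w, u, (f u), s1} : Set α) = ({w, u, (f u), s2} : Set α) :=
                    conflict5 hsp (hne01.symm) (hne16) (hne12) (hne13) (hne06) (hne02) (hne03) (hne26.symm) (hne36.symm) (hne23)
                      (by intro x hx; simp only [Set.mem_insert_iff, Set.mem_singleton_iff] at hx ⊢; rcases hx with rfl | rfl | rfl | rfl; exacts [Or.inl rfl, Or.inr (Or.inl rfl), Or.inr (Or.inr (Or.inl rfl)), Or.inr (Or.inr (Or.inr (Or.inl rfl)))])
                      (by intro x hx; simp only [Set.mem_insert_iff, Set.mem_singleton_iff] at hx ⊢; rcases hx with rfl | rfl | rfl | rfl; exacts [Or.inl rfl, Or.inr (Or.inl rfl), Or.inr (Or.inr (Or.inl rfl)), Or.inr (Or.inr (Or.inr (Or.inr (rfl))))])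
                      ⟨hne01.symm, hne16, hne12, hne06, hne02, hne26.symm, (hle hb01).symm, hp06, (hle hb26).symm, hn16, hn12, hn02⟩
                      ⟨hne01.symm, hne16, hne13, hne06, hne03, hne36.symm, (hle hb01).symm, hp06, (hle hb36).symm, hn16, hn13, hn03⟩
                  have hvm : s1 ∈ ({w, u, (f u), s2} : Set α) := by rw [← heq]; simp
                  simp only [Set.mem_insert_iff, Set.mem_singleton_iff] at hvm
                  rcases hvm with h | h | h | h
                  exacts [hne12 h.symm, hne02 h.symm, hne26 h, hne23 h]
          ·
            rcases Classical.em (G'.Adj w (f u)) with hp16 | hn16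
            ·
              rcases Classical.em (G'.Adj u r) with hp07 | hn07
              ·
                exact three_fills hp06 hp07 hp16 hnb06 hnb07 hnb16
                  (by intro hco; rw [Sym2.eq_iff] at hco; rcases hco with ⟨h1, h2⟩ | ⟨h1, h2⟩; exacts [hne67 h2, hne07 h1]) (by intro hco; rw [Sym2.eq_iff] at hco; rcases hco with ⟨h1, h2⟩ | ⟨h1, h2⟩; exacts [hne01 h1, hne06 h1]) (by intro hco; rw [Sym2.eq_iff] at hco; rcases hco with ⟨h1, h2⟩ | ⟨h1, h2⟩; exacts [hne01 h1, hne06 h1])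
              ·
                rcases Classical.em (G'.Adj w r) with hp17 | hn17
                ·
                  exact three_fills hp06 hp16 hp17 hnb06 hnb16 hnb17
                    (by intro hco; rw [Sym2.eq_iff] at hco; rcases hco with ⟨h1, h2⟩ | ⟨h1, h2⟩; exacts [hne01 h1, hne06 h1]) (by intro hco; rw [Sym2.eq_iff] at hco; rcases hco with ⟨h1, h2⟩ | ⟨h1, h2⟩; exacts [hne01 h1, hne07 h1]) (by intro hco; rw [Sym2.eq_iff] at hco; rcases hco with ⟨h1, h2⟩ | ⟨h1, h2⟩; exacts [hne67 h2, hne17 h1])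
                ·
                  exfalso
                  have heq : ({w, u, (f s1), s2} : Set α) = ({w, u, (f s1), r} : Set α) :=
                    conflict5 hsp (hne01.symm) (hne14) (hne13) (hne17) (hne04) (hne03) (hne07) (hne34.symm) (hne47) (hne37)
                      (by intro x hx; simp only [Set.mem_insert_iff, Set.mem_singleton_iff] at hx ⊢; rcases hx with rfl | rfl | rfl | rfl; exacts [Or.inl rfl, Or.inr (Or.inl rfl), Or.inr (Or.inr (Or.inl rfl)), Or.inr (Or.inr (Or.inr (Or.inl rfl)))])
                      (by intro x hx; simp only [Set.mem_insert_iff, Set.mem_singleton_iff] at hx ⊢; rcases hx with rfl | rfl | rfl | rfl; exacts [Or.inl rfl, Or.inr (Or.inl rfl), Or.inr (Or.inr (Or.inl rfl)), Or.inr (Or.inr (Or.inr (Or.inr (rfl))))])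
                      ⟨hne01.symm, hne14, hne13, hne04, hne03, hne34.symm, (hle hb01).symm, (hle hb04), (hle hb34).symm, hn14, hn13, hn03⟩
                      ⟨hne01.symm, hne14, hne17, hne04, hne07, hne47, (hle hb01).symm, (hle hb04), (hle hb47), hn14, hn17, hn07⟩
                  have hvm : s2 ∈ ({w, u, (f s1), r} : Set α) := by rw [← heq]; simp
                  simp only [Set.mem_insert_iff, Set.mem_singleton_iff] at hvm
                  rcases hvm with h | h | h | h
                  exacts [hne13 h.symm, hne03 h.symm, hne34 h, hne37 h]
            ·
              exfalso
              have heq : ({w, u, (f s1), s2} : Set α) = ({w, u, (f u), s2} : Set α) :=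
                conflict5 hsp (hne01.symm) (hne14) (hne13) (hne16) (hne04) (hne03) (hne06) (hne34.symm) (hne46) (hne36)
                  (by intro x hx; simp only [Set.mem_insert_iff, Set.mem_singleton_iff] at hx ⊢; rcases hx with rfl | rfl | rfl | rfl; exacts [Or.inl rfl, Or.inr (Or.inl rfl), Or.inr (Or.inr (Or.inl rfl)), Or.inr (Or.inr (Or.inr (Or.inl rfl)))])
                  (by intro x hx; simp only [Set.mem_insert_iff, Set.mem_singleton_iff] at hx ⊢; rcases hx with rfl | rfl | rfl | rfl; exacts [Or.inl rfl, Or.inr (Or.inl rfl), Or.inr (Or.inr (Or.inr (Or.inr (rfl)))), Or.inr (Or.inr (Or.inr (Or.inl rfl)))])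
                  ⟨hne01.symm, hne14, hne13, hne04, hne03, hne34.symm, (hle hb01).symm, (hle hb04), (hle hb34).symm, hn14, hn13, hn03⟩
                  ⟨hne01.symm, hne16, hne13, hne06, hne03, hne36.symm, (hle hb01).symm, hp06, (hle hb36).symm, hn16, hn13, hn03⟩
              have hvm : (f s1) ∈ ({w, u, (f u), s2} : Set α) := by rw [← heq]; simp
              simp only [Set.mem_insert_iff, Set.mem_singleton_iff] at hvm
              rcases hvm with h | h | h | h
              exacts [hne14 h.symm, hne04 h.symm, hne46 h, hne34 h.symm]
    ·
      rcases Classical.em (G'.Adj w (f s1)) with hp14 | hn14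
      ·
        rcases Classical.em (G'.Adj u s1) with hp02 | hn02
        ·
          rcases Classical.em (G'.Adj u s2) with hp03 | hn03
          ·
            exact three_fills hp02 hp03 hp14 hnb02 hnb03 hnb14
              (by intro hco; rw [Sym2.eq_iff] at hco; rcases hco with ⟨h1, h2⟩ | ⟨h1, h2⟩; exacts [hne23 h2, hne03 h1]) (by intro hco; rw [Sym2.eq_iff] at hco; rcases hco with ⟨h1, h2⟩ | ⟨h1, h2⟩; exacts [hne01 h1, hne04 h1]) (by intro hco; rw [Sym2.eq_iff] at hco; rcases hco with ⟨h1, h2⟩ | ⟨h1, h2⟩; exacts [hne01 h1, hne04 h1])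
          ·
            rcases Classical.em (G'.Adj s1 s2) with hp23 | hn23
            ·
              exact three_fills hp02 hp14 hp23 hnb02 hnb14 hnb23
                (by intro hco; rw [Sym2.eq_iff] at hco; rcases hco with ⟨h1, h2⟩ | ⟨h1, h2⟩; exacts [hne01 h1, hne04 h1]) (by intro hco; rw [Sym2.eq_iff] at hco; rcases hco with ⟨h1, h2⟩ | ⟨h1, h2⟩; exacts [hne02 h1, hne03 h1]) (by intro hco; rw [Sym2.eq_iff] at hco; rcases hco with ⟨h1, h2⟩ | ⟨h1, h2⟩; exacts [hne12 h1, hne13 h1])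
            ·
              rcases Classical.em (G'.Adj s2 (f s2)) with hp35 | hn35
              ·
                exact three_fills hp02 hp14 hp35 hnb02 hnb14 hnb35
                  (by intro hco; rw [Sym2.eq_iff] at hco; rcases hco with ⟨h1, h2⟩ | ⟨h1, h2⟩; exacts [hne01 h1, hne04 h1]) (by intro hco; rw [Sym2.eq_iff] at hco; rcases hco with ⟨h1, h2⟩ | ⟨h1, h2⟩; exacts [hne03 h1, hne05 h1]) (by intro hco; rw [Sym2.eq_iff] at hco; rcases hco with ⟨h1, h2⟩ | ⟨h1, h2⟩; exacts [hne13 h1, hne15 h1])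
              ·
                exfalso
                have heq : ({u, s1, (f u), s2} : Set α) = ({u, (f s2), (f u), s2} : Set α) :=
                  conflict5 hsp (hne02) (hne06) (hne03) (hne05) (hne26) (hne23) (hne25) (hne36.symm) (hne56.symm) (hne35)
                    (by intro x hx; simp only [Set.mem_insert_iff, Set.mem_singleton_iff] at hx ⊢; rcases hx with rfl | rfl | rfl | rfl; exacts [Or.inl rfl, Or.inr (Or.inl rfl), Or.inr (Or.inr (Or.inl rfl)), Or.inr (Or.inr (Or.inr (Or.inl rfl)))])
                    (by intro x hx; simp only [Set.mem_insert_iff, Set.mem_singleton_iff] at hx ⊢; rcases hx with rfl | rfl | rfl | rfl; exacts [Or.inl rfl, Or.inr (Or.inr (Or.inr (Or.inr (rfl)))), Or.inr (Or.inr (Or.inl rfl)), Or.inr (Or.inr (Or.inr (Or.inl rfl)))])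
                    ⟨hne02, hne06, hne03, hne26, hne23, hne36.symm, hp02, (hle hb26), (hle hb36).symm, hn06, hn03, hn23⟩
                    ⟨hne05, hne06, hne03, hne56, hne35.symm, hne36.symm, (hle hb05), (hle hb56), (hle hb36).symm, hn06, hn03, (fun hh => hn35 hh.symm)⟩
                have hvm : s1 ∈ ({u, (f s2), (f u), s2} : Set α) := by rw [← heq]; simp
                simp only [Set.mem_insert_iff, Set.mem_singleton_iff] at hvm
                rcases hvm with h | h | h | h
                exacts [hne02 h.symm, hne25 h, hne26 h, hne23 h]
        ·
          rcases Classical.em (G'.Adj w s1) with hp12 | hn12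
          ·
            rcases Classical.em (G'.Adj w (f u)) with hp16 | hn16
            ·
              exact three_fills hp12 hp14 hp16 hnb12 hnb14 hnb16
                (by intro hco; rw [Sym2.eq_iff] at hco; rcases hco with ⟨h1, h2⟩ | ⟨h1, h2⟩; exacts [hne24 h2, hne14 h1]) (by intro hco; rw [Sym2.eq_iff] at hco; rcases hco with ⟨h1, h2⟩ | ⟨h1, h2⟩; exacts [hne26 h2, hne16 h1]) (by intro hco; rw [Sym2.eq_iff] at hco; rcases hco with ⟨h1, h2⟩ | ⟨h1, h2⟩; exacts [hne46 h2, hne16 h1])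
            ·
              rcases Classical.em (G'.Adj s1 (f s1)) with hp24 | hn24
              ·
                exact three_fills hp12 hp14 hp24 hnb12 hnb14 hnb24
                  (by intro hco; rw [Sym2.eq_iff] at hco; rcases hco with ⟨h1, h2⟩ | ⟨h1, h2⟩; exacts [hne24 h2, hne14 h1]) (by intro hco; rw [Sym2.eq_iff] at hco; rcases hco with ⟨h1, h2⟩ | ⟨h1, h2⟩; exacts [hne12 h1, hne14 h1]) (by intro hco; rw [Sym2.eq_iff] at hco; rcases hco with ⟨h1, h2⟩ | ⟨h1, h2⟩; exacts [hne12 h1, hne14 h1])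
              ·
                exfalso
                have heq : ({u, w, s1, (f u)} : Set α) = ({u, (f s1), (f u), s1} : Set α) :=
                  conflict5 hsp (hne01) (hne02) (hne06) (hne04) (hne12) (hne16) (hne14) (hne26) (hne24) (hne46.symm)
                    (by intro x hx; simp only [Set.mem_insert_iff, Set.mem_singleton_iff] at hx ⊢; rcases hx with rfl | rfl | rfl | rfl; exacts [Or.inl rfl, Or.inr (Or.inl rfl), Or.inr (Or.inr (Or.inl rfl)), Or.inr (Or.inr (Or.inr (Or.inl rfl)))])
                    (by intro x hx; simp only [Set.mem_insert_iff, Set.mem_singleton_iff] at hx ⊢; rcases hx with rfl | rfl | rfl | rfl; exacts [Or.inl rfl, Or.inr (Or.inr (Or.inr (Or.inr (rfl)))), Or.inr (Or.inr (Or.inr (Or.inl rfl))), Or.inr (Or.inr (Or.inl rfl))])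
                    ⟨hne01, hne02, hne06, hne12, hne16, hne26, (hle hb01), hp12, (hle hb26), hn02, hn06, hn16⟩
                    ⟨hne04, hne06, hne02, hne46, hne24.symm, hne26.symm, (hle hb04), (hle hb46), (hle hb26).symm, hn06, hn02, (fun hh => hn24 hh.symm)⟩
                have hvm : w ∈ ({u, (f s1), (f u), s1} : Set α) := by rw [← heq]; simp
                simp only [Set.mem_insert_iff, Set.mem_singleton_iff] at hvm
                rcases hvm with h | h | h | h
                exacts [hne01 h.symm, hne14 h, hne16 h, hne12 h]
          ·
            rcases Classical.em (G'.Adj w (f u)) with hp16 | hn16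
            ·
              rcases Classical.em (G'.Adj s1 (f s1)) with hp24 | hn24
              ·
                exact three_fills hp14 hp16 hp24 hnb14 hnb16 hnb24
                  (by intro hco; rw [Sym2.eq_iff] at hco; rcases hco with ⟨h1, h2⟩ | ⟨h1, h2⟩; exacts [hne46 h2, hne16 h1]) (by intro hco; rw [Sym2.eq_iff] at hco; rcases hco with ⟨h1, h2⟩ | ⟨h1, h2⟩; exacts [hne12 h1, hne14 h1]) (by intro hco; rw [Sym2.eq_iff] at hco; rcases hco with ⟨h1, h2⟩ | ⟨h1, h2⟩; exacts [hne12 h1, hne14 h1])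
              ·
                exfalso
                have heq : ({u, w, (f u), s1} : Set α) = ({u, (f s1), (f u), s1} : Set α) :=
                  conflict5 hsp (hne01) (hne06) (hne02) (hne04) (hne16) (hne12) (hne14) (hne26.symm) (hne46.symm) (hne24)
                    (by intro x hx; simp only [Set.mem_insert_iff, Set.mem_singleton_iff] at hx ⊢; rcases hx with rfl | rfl | rfl | rfl; exacts [Or.inl rfl, Or.inr (Or.inl rfl), Or.inr (Or.inr (Or.inl rfl)), Or.inr (Or.inr (Or.inr (Or.inl rfl)))])
                    (by intro x hx; simp only [Set.mem_insert_iff, Set.mem_singleton_iff] at hx ⊢; rcases hx with rfl | rfl | rfl | rfl; exacts [Or.inl rfl, Or.inr (Or.inr (Or.inr (Or.inr (rfl)))), Or.inr (Or.inr (Or.inl rfl)), Or.inr (Or.inr (Or.inr (Or.inl rfl)))])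
                    ⟨hne01, hne06, hne02, hne16, hne12, hne26.symm, (hle hb01), hp16, (hle hb26).symm, hn06, hn02, hn12⟩
                    ⟨hne04, hne06, hne02, hne46, hne24.symm, hne26.symm, (hle hb04), (hle hb46), (hle hb26).symm, hn06, hn02, (fun hh => hn24 hh.symm)⟩
                have hvm : w ∈ ({u, (f s1), (f u), s1} : Set α) := by rw [← heq]; simp
                simp only [Set.mem_insert_iff, Set.mem_singleton_iff] at hvm
                rcases hvm with h | h | h | h
                exacts [hne01 h.symm, hne14 h, hne16 h, hne12 h]
            ·
              rcases Classical.em (G'.Adj s1 (f s1)) with hp24 | hn24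
              ·
                rcases Classical.em (G'.Adj w (f s2)) with hp15 | hn15
                ·
                  exact three_fills hp14 hp15 hp24 hnb14 hnb15 hnb24
                    (by intro hco; rw [Sym2.eq_iff] at hco; rcases hco with ⟨h1, h2⟩ | ⟨h1, h2⟩; exacts [hne45 h2, hne15 h1]) (by intro hco; rw [Sym2.eq_iff] at hco; rcases hco with ⟨h1, h2⟩ | ⟨h1, h2⟩; exacts [hne12 h1, hne14 h1]) (by intro hco; rw [Sym2.eq_iff] at hco; rcases hco with ⟨h1, h2⟩ | ⟨h1, h2⟩; exacts [hne12 h1, hne14 h1])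
                ·
                  exfalso
                  have heq : ({w, u, (f s2), s1} : Set α) = ({w, u, (f s2), (f u)} : Set α) :=
                    conflict5 hsp (hne01.symm) (hne15) (hne12) (hne16) (hne05) (hne02) (hne06) (hne25.symm) (hne56) (hne26)
                      (by intro x hx; simp only [Set.mem_insert_iff, Set.mem_singleton_iff] at hx ⊢; rcases hx with rfl | rfl | rfl | rfl; exacts [Or.inl rfl, Or.inr (Or.inl rfl), Or.inr (Or.inr (Or.inl rfl)), Or.inr (Or.inr (Or.inr (Or.inl rfl)))])
                      (by intro x hx; simp only [Set.mem_insert_iff, Set.mem_singleton_iff] at hx ⊢; rcases hx with rfl | rfl | rfl | rfl; exacts [Or.inl rfl, Or.inr (Or.inl rfl), Or.inr (Or.inr (Or.inl rfl)), Or.inr (Or.inr (Or.inr (Or.inr (rfl))))])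
                      ⟨hne01.symm, hne15, hne12, hne05, hne02, hne25.symm, (hle hb01).symm, (hle hb05), (hle hb25).symm, hn15, hn12, hn02⟩
                      ⟨hne01.symm, hne15, hne16, hne05, hne06, hne56, (hle hb01).symm, (hle hb05), (hle hb56), hn15, hn16, hn06⟩
                  have hvm : s1 ∈ ({w, u, (f s2), (f u)} : Set α) := by rw [← heq]; simp
                  simp only [Set.mem_insert_iff, Set.mem_singleton_iff] at hvm
                  rcases hvm with h | h | h | h
                  exacts [hne12 h.symm, hne02 h.symm, hne25 h, hne26 h]
              ·
                exfalso
                have heq : ({u, (f s1), (f u), s1} : Set α) = ({w, (f s1), (f u), s1} : Set α) :=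
                  conflict5 hsp (hne04) (hne06) (hne02) (hne01) (hne46) (hne24.symm) (hne14.symm) (hne26.symm) (hne16.symm) (hne12.symm)
                    (by intro x hx; simp only [Set.mem_insert_iff, Set.mem_singleton_iff] at hx ⊢; rcases hx with rfl | rfl | rfl | rfl; exacts [Or.inl rfl, Or.inr (Or.inl rfl), Or.inr (Or.inr (Or.inl rfl)), Or.inr (Or.inr (Or.inr (Or.inl rfl)))])
                    (by intro x hx; simp only [Set.mem_insert_iff, Set.mem_singleton_iff] at hx ⊢; rcases hx with rfl | rfl | rfl | rfl; exacts [Or.inr (Or.inr (Or.inr (Or.inr (rfl)))), Or.inr (Or.inl rfl), Or.inr (Or.inr (Or.inl rfl)), Or.inr (Or.inr (Or.inr (Or.inl rfl)))])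
                    ⟨hne04, hne06, hne02, hne46, hne24.symm, hne26.symm, (hle hb04), (hle hb46), (hle hb26).symm, hn06, hn02, (fun hh => hn24 hh.symm)⟩
                    ⟨hne14, hne16, hne12, hne46, hne24.symm, hne26.symm, hp14, (hle hb46), (hle hb26).symm, hn16, hn12, (fun hh => hn24 hh.symm)⟩
                have hvm : u ∈ ({w, (f s1), (f u), s1} : Set α) := by rw [← heq]; simp
                simp only [Set.mem_insert_iff, Set.mem_singleton_iff] at hvm
                rcases hvm with h | h | h | h
                exacts [hne01 h, hne04 h, hne06 h, hne02 h]
      ·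
        rcases Classical.em (G'.Adj w (f s2)) with hp15 | hn15
        ·
          rcases Classical.em (G'.Adj u s1) with hp02 | hn02
          ·
            rcases Classical.em (G'.Adj w s1) with hp12 | hn12
            ·
              exact three_fills hp02 hp12 hp15 hnb02 hnb12 hnb15
                (by intro hco; rw [Sym2.eq_iff] at hco; rcases hco with ⟨h1, h2⟩ | ⟨h1, h2⟩; exacts [hne01 h1, hne02 h1]) (by intro hco; rw [Sym2.eq_iff] at hco; rcases hco with ⟨h1, h2⟩ | ⟨h1, h2⟩; exacts [hne01 h1, hne05 h1]) (by intro hco; rw [Sym2.eq_iff] at hco; rcases hco with ⟨h1, h2⟩ | ⟨h1, h2⟩; exacts [hne25 h2, hne15 h1])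
            ·
              rcases Classical.em (G'.Adj w (f u)) with hp16 | hn16
              ·
                exact three_fills hp02 hp15 hp16 hnb02 hnb15 hnb16
                  (by intro hco; rw [Sym2.eq_iff] at hco; rcases hco with ⟨h1, h2⟩ | ⟨h1, h2⟩; exacts [hne01 h1, hne05 h1]) (by intro hco; rw [Sym2.eq_iff] at hco; rcases hco with ⟨h1, h2⟩ | ⟨h1, h2⟩; exacts [hne01 h1, hne06 h1]) (by intro hco; rw [Sym2.eq_iff] at hco; rcases hco with ⟨h1, h2⟩ | ⟨h1, h2⟩; exacts [hne56 h2, hne16 h1])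
              ·
                exfalso
                have heq : ({w, u, s1, (f u)} : Set α) = ({w, u, (f s1), (f u)} : Set α) :=
                  conflict5 hsp (hne01.symm) (hne12) (hne16) (hne14) (hne02) (hne06) (hne04) (hne26) (hne24) (hne46.symm)
                    (by intro x hx; simp only [Set.mem_insert_iff, Set.mem_singleton_iff] at hx ⊢; rcases hx with rfl | rfl | rfl | rfl; exacts [Or.inl rfl, Or.inr (Or.inl rfl), Or.inr (Or.inr (Or.inl rfl)), Or.inr (Or.inr (Or.inr (Or.inl rfl)))])
                    (by intro x hx; simp only [Set.mem_insert_iff, Set.mem_singleton_iff] at hx ⊢; rcases hx with rfl | rfl | rfl | rfl; exacts [Or.inl rfl, Or.inr (Or.inl rfl), Or.inr (Or.inr (Or.inr (Or.inr (rfl)))), Or.inr (Or.inr (Or.inr (Or.inl rfl)))])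
                    ⟨hne01.symm, hne12, hne16, hne02, hne06, hne26, (hle hb01).symm, hp02, (hle hb26), hn12, hn16, hn06⟩
                    ⟨hne01.symm, hne14, hne16, hne04, hne06, hne46, (hle hb01).symm, (hle hb04), (hle hb46), hn14, hn16, hn06⟩
                have hvm : s1 ∈ ({w, u, (f s1), (f u)} : Set α) := by rw [← heq]; simp
                simp only [Set.mem_insert_iff, Set.mem_singleton_iff] at hvm
                rcases hvm with h | h | h | h
                exacts [hne12 h.symm, hne02 h.symm, hne24 h, hne26 h]
          ·
            rcases Classical.em (G'.Adj w (f u)) with hp16 | hn16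
            ·
              rcases Classical.em (G'.Adj w s1) with hp12 | hn12
              ·
                exact three_fills hp12 hp15 hp16 hnb12 hnb15 hnb16
                  (by intro hco; rw [Sym2.eq_iff] at hco; rcases hco with ⟨h1, h2⟩ | ⟨h1, h2⟩; exacts [hne25 h2, hne15 h1]) (by intro hco; rw [Sym2.eq_iff] at hco; rcases hco with ⟨h1, h2⟩ | ⟨h1, h2⟩; exacts [hne26 h2, hne16 h1]) (by intro hco; rw [Sym2.eq_iff] at hco; rcases hco with ⟨h1, h2⟩ | ⟨h1, h2⟩; exacts [hne56 h2, hne16 h1])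
              ·
                rcases Classical.em (G'.Adj s1 (f s1)) with hp24 | hn24
                ·
                  exact three_fills hp15 hp16 hp24 hnb15 hnb16 hnb24
                    (by intro hco; rw [Sym2.eq_iff] at hco; rcases hco with ⟨h1, h2⟩ | ⟨h1, h2⟩; exacts [hne56 h2, hne16 h1]) (by intro hco; rw [Sym2.eq_iff] at hco; rcases hco with ⟨h1, h2⟩ | ⟨h1, h2⟩; exacts [hne12 h1, hne14 h1]) (by intro hco; rw [Sym2.eq_iff] at hco; rcases hco with ⟨h1, h2⟩ | ⟨h1, h2⟩; exacts [hne12 h1, hne14 h1])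
                ·
                  exfalso
                  have heq : ({u, w, (f u), s1} : Set α) = ({u, (f s1), (f u), s1} : Set α) :=
                    conflict5 hsp (hne01) (hne06) (hne02) (hne04) (hne16) (hne12) (hne14) (hne26.symm) (hne46.symm) (hne24)
                      (by intro x hx; simp only [Set.mem_insert_iff, Set.mem_singleton_iff] at hx ⊢; rcases hx with rfl | rfl | rfl | rfl; exacts [Or.inl rfl, Or.inr (Or.inl rfl), Or.inr (Or.inr (Or.inl rfl)), Or.inr (Or.inr (Or.inr (Or.inl rfl)))])
                      (by intro x hx; simp only [Set.mem_insert_iff, Set.mem_singleton_iff] at hx ⊢; rcases hx with rfl | rfl | rfl | rfl; exacts [Or.inl rfl, Or.inr (Or.inr (Or.inr (Or.inr (rfl)))), Or.inr (Or.inr (Or.inl rfl)), Or.inr (Or.inr (Or.inr (Or.inl rfl)))])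
                      ⟨hne01, hne06, hne02, hne16, hne12, hne26.symm, (hle hb01), hp16, (hle hb26).symm, hn06, hn02, hn12⟩
                      ⟨hne04, hne06, hne02, hne46, hne24.symm, hne26.symm, (hle hb04), (hle hb46), (hle hb26).symm, hn06, hn02, (fun hh => hn24 hh.symm)⟩
                  have hvm : w ∈ ({u, (f s1), (f u), s1} : Set α) := by rw [← heq]; simp
                  simp only [Set.mem_insert_iff, Set.mem_singleton_iff] at hvm
                  rcases hvm with h | h | h | h
                  exacts [hne01 h.symm, hne14 h, hne16 h, hne12 h]
            ·
              rcases Classical.em (G'.Adj s1 (f s1)) with hp24 | hn24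
              ·
                rcases Classical.em (G'.Adj w s1) with hp12 | hn12
                ·
                  exact three_fills hp12 hp15 hp24 hnb12 hnb15 hnb24
                    (by intro hco; rw [Sym2.eq_iff] at hco; rcases hco with ⟨h1, h2⟩ | ⟨h1, h2⟩; exacts [hne25 h2, hne15 h1]) (by intro hco; rw [Sym2.eq_iff] at hco; rcases hco with ⟨h1, h2⟩ | ⟨h1, h2⟩; exacts [hne12 h1, hne14 h1]) (by intro hco; rw [Sym2.eq_iff] at hco; rcases hco with ⟨h1, h2⟩ | ⟨h1, h2⟩; exacts [hne12 h1, hne14 h1])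
                ·
                  exfalso
                  have heq : ({w, u, (f s1), s1} : Set α) = ({w, u, (f s1), (f u)} : Set α) :=
                    conflict5 hsp (hne01.symm) (hne14) (hne12) (hne16) (hne04) (hne02) (hne06) (hne24.symm) (hne46) (hne26)
                      (by intro x hx; simp only [Set.mem_insert_iff, Set.mem_singleton_iff] at hx ⊢; rcases hx with rfl | rfl | rfl | rfl; exacts [Or.inl rfl, Or.inr (Or.inl rfl), Or.inr (Or.inr (Or.inl rfl)), Or.inr (Or.inr (Or.inr (Or.inl rfl)))])
                      (by intro x hx; simp only [Set.mem_insert_iff, Set.mem_singleton_iff] at hx ⊢; rcases hx with rfl | rfl | rfl | rfl; exacts [Or.inl rfl, Or.inr (Or.inl rfl), Or.inr (Or.inr (Or.inl rfl)), Or.inr (Or.inr (Or.inr (Or.inr (rfl))))])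
                      ⟨hne01.symm, hne14, hne12, hne04, hne02, hne24.symm, (hle hb01).symm, (hle hb04), hp24.symm, hn14, hn12, hn02⟩
                      ⟨hne01.symm, hne14, hne16, hne04, hne06, hne46, (hle hb01).symm, (hle hb04), (hle hb46), hn14, hn16, hn06⟩
                  have hvm : s1 ∈ ({w, u, (f s1), (f u)} : Set α) := by rw [← heq]; simp
                  simp only [Set.mem_insert_iff, Set.mem_singleton_iff] at hvm
                  rcases hvm with h | h | h | h
                  exacts [hne12 h.symm, hne02 h.symm, hne24 h, hne26 h]
              ·
                exfalso
                have heq : ({u, (f s1), (f u), s1} : Set α) = ({w, u, (f s1), (f u)} : Set α) :=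
                  conflict5 hsp (hne04) (hne06) (hne02) (hne01) (hne46) (hne24.symm) (hne14.symm) (hne26.symm) (hne16.symm) (hne12.symm)
                    (by intro x hx; simp only [Set.mem_insert_iff, Set.mem_singleton_iff] at hx ⊢; rcases hx with rfl | rfl | rfl | rfl; exacts [Or.inl rfl, Or.inr (Or.inl rfl), Or.inr (Or.inr (Or.inl rfl)), Or.inr (Or.inr (Or.inr (Or.inl rfl)))])
                    (by intro x hx; simp only [Set.mem_insert_iff, Set.mem_singleton_iff] at hx ⊢; rcases hx with rfl | rfl | rfl | rfl; exacts [Or.inr (Or.inr (Or.inr (Or.inr (rfl)))), Or.inl rfl, Or.inr (Or.inl rfl), Or.inr (Or.inr (Or.inl rfl))])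
                    ⟨hne04, hne06, hne02, hne46, hne24.symm, hne26.symm, (hle hb04), (hle hb46), (hle hb26).symm, hn06, hn02, (fun hh => hn24 hh.symm)⟩
                    ⟨hne01.symm, hne14, hne16, hne04, hne06, hne46, (hle hb01).symm, (hle hb04), (hle hb46), hn14, hn16, hn06⟩
                have hvm : s1 ∈ ({w, u, (f s1), (f u)} : Set α) := by rw [← heq]; simp
                simp only [Set.mem_insert_iff, Set.mem_singleton_iff] at hvm
                rcases hvm with h | h | h | h
                exacts [hne12 h.symm, hne02 h.symm, hne24 h, hne26 h]
        ·
          rcases Classical.em (G'.Adj w (f u)) with hp16 | hn16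
          ·
            rcases Classical.em (G'.Adj u s1) with hp02 | hn02
            ·
              rcases Classical.em (G'.Adj u s2) with hp03 | hn03
              ·
                exact three_fills hp02 hp03 hp16 hnb02 hnb03 hnb16
                  (by intro hco; rw [Sym2.eq_iff] at hco; rcases hco with ⟨h1, h2⟩ | ⟨h1, h2⟩; exacts [hne23 h2, hne03 h1]) (by intro hco; rw [Sym2.eq_iff] at hco; rcases hco with ⟨h1, h2⟩ | ⟨h1, h2⟩; exacts [hne01 h1, hne06 h1]) (by intro hco; rw [Sym2.eq_iff] at hco; rcases hco with ⟨h1, h2⟩ | ⟨h1, h2⟩; exacts [hne01 h1, hne06 h1])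
              ·
                rcases Classical.em (G'.Adj w s2) with hp13 | hn13
                ·
                  exact three_fills hp02 hp13 hp16 hnb02 hnb13 hnb16
                    (by intro hco; rw [Sym2.eq_iff] at hco; rcases hco with ⟨h1, h2⟩ | ⟨h1, h2⟩; exacts [hne01 h1, hne03 h1]) (by intro hco; rw [Sym2.eq_iff] at hco; rcases hco with ⟨h1, h2⟩ | ⟨h1, h2⟩; exacts [hne01 h1, hne06 h1]) (by intro hco; rw [Sym2.eq_iff] at hco; rcases hco with ⟨h1, h2⟩ | ⟨h1, h2⟩; exacts [hne36 h2, hne16 h1])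
                ·
                  exfalso
                  have heq : ({u, w, (f u), s2} : Set α) = ({w, u, (f s1), s2} : Set α) :=
                    conflict5 hsp (hne01) (hne06) (hne03) (hne04) (hne16) (hne13) (hne14) (hne36.symm) (hne46.symm) (hne34)
                      (by intro x hx; simp only [Set.mem_insert_iff, Set.mem_singleton_iff] at hx ⊢; rcases hx with rfl | rfl | rfl | rfl; exacts [Or.inl rfl, Or.inr (Or.inl rfl), Or.inr (Or.inr (Or.inl rfl)), Or.inr (Or.inr (Or.inr (Or.inl rfl)))])
                      (by intro x hx; simp only [Set.mem_insert_iff, Set.mem_singleton_iff] at hx ⊢; rcases hx with rfl | rfl | rfl | rfl; exacts [Or.inr (Or.inl rfl), Or.inl rfl, Or.inr (Or.inr (Or.inr (Or.inr (rfl)))), Or.inr (Or.inr (Or.inr (Or.inl rfl)))])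
                      ⟨hne01, hne06, hne03, hne16, hne13, hne36.symm, (hle hb01), hp16, (hle hb36).symm, hn06, hn03, hn13⟩
                      ⟨hne01.symm, hne14, hne13, hne04, hne03, hne34.symm, (hle hb01).symm, (hle hb04), (hle hb34).symm, hn14, hn13, hn03⟩
                  have hvm : (f u) ∈ ({w, u, (f s1), s2} : Set α) := by rw [← heq]; simp
                  simp only [Set.mem_insert_iff, Set.mem_singleton_iff] at hvm
                  rcases hvm with h | h | h | h
                  exacts [hne16 h.symm, hne06 h.symm, hne46 h.symm, hne36 h.symm]
            ·
              rcases Classical.em (G'.Adj w s1) with hp12 | hn12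
              ·
                rcases Classical.em (G'.Adj s1 (f s1)) with hp24 | hn24
                ·
                  exact three_fills hp12 hp16 hp24 hnb12 hnb16 hnb24
                    (by intro hco; rw [Sym2.eq_iff] at hco; rcases hco with ⟨h1, h2⟩ | ⟨h1, h2⟩; exacts [hne26 h2, hne16 h1]) (by intro hco; rw [Sym2.eq_iff] at hco; rcases hco with ⟨h1, h2⟩ | ⟨h1, h2⟩; exacts [hne12 h1, hne14 h1]) (by intro hco; rw [Sym2.eq_iff] at hco; rcases hco with ⟨h1, h2⟩ | ⟨h1, h2⟩; exacts [hne12 h1, hne14 h1])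
                ·
                  exfalso
                  have heq : ({u, (f s1), (f u), s1} : Set α) = ({s1, w, u, (f s1)} : Set α) :=
                    conflict5 hsp (hne04) (hne06) (hne02) (hne01) (hne46) (hne24.symm) (hne14.symm) (hne26.symm) (hne16.symm) (hne12.symm)
                      (by intro x hx; simp only [Set.mem_insert_iff, Set.mem_singleton_iff] at hx ⊢; rcases hx with rfl | rfl | rfl | rfl; exacts [Or.inl rfl, Or.inr (Or.inl rfl), Or.inr (Or.inr (Or.inl rfl)), Or.inr (Or.inr (Or.inr (Or.inl rfl)))])
                      (by intro x hx; simp only [Set.mem_insert_iff, Set.mem_singleton_iff] at hx ⊢; rcases hx with rfl | rfl | rfl | rfl; exacts [Or.inr (Or.inr (Or.inr (Or.inl rfl))), Or.inr (Or.inr (Or.inr (Or.inr (rfl)))), Or.inl rfl, Or.inr (Or.inl rfl)])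
                      ⟨hne04, hne06, hne02, hne46, hne24.symm, hne26.symm, (hle hb04), (hle hb46), (hle hb26).symm, hn06, hn02, (fun hh => hn24 hh.symm)⟩
                      ⟨hne12.symm, hne02.symm, hne24, hne01.symm, hne14, hne04, hp12.symm, (hle hb01).symm, (hle hb04), (fun hh => hn02 hh.symm), hn24, hn14⟩
                  have hvm : (f u) ∈ ({s1, w, u, (f s1)} : Set α) := by rw [← heq]; simp
                  simp only [Set.mem_insert_iff, Set.mem_singleton_iff] at hvm
                  rcases hvm with h | h | h | h
                  exacts [hne26 h.symm, hne16 h.symm, hne06 h.symm, hne46 h.symm]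
              ·
                exfalso
                have heq : ({u, w, (f u), s1} : Set α) = ({w, u, (f s2), s1} : Set α) :=
                  conflict5 hsp (hne01) (hne06) (hne02) (hne05) (hne16) (hne12) (hne15) (hne26.symm) (hne56.symm) (hne25)
                    (by intro x hx; simp only [Set.mem_insert_iff, Set.mem_singleton_iff] at hx ⊢; rcases hx with rfl | rfl | rfl | rfl; exacts [Or.inl rfl, Or.inr (Or.inl rfl), Or.inr (Or.inr (Or.inl rfl)), Or.inr (Or.inr (Or.inr (Or.inl rfl)))])
                    (by intro x hx; simp only [Set.mem_insert_iff, Set.mem_singleton_iff] at hx ⊢; rcases hx with rfl | rfl | rfl | rfl; exacts [Or.inr (Or.inl rfl), Or.inl rfl, Or.inr (Or.inr (Or.inr (Or.inr (rfl)))), Or.inr (Or.inr (Or.inr (Or.inl rfl)))])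
                    ⟨hne01, hne06, hne02, hne16, hne12, hne26.symm, (hle hb01), hp16, (hle hb26).symm, hn06, hn02, hn12⟩
                    ⟨hne01.symm, hne15, hne12, hne05, hne02, hne25.symm, (hle hb01).symm, (hle hb05), (hle hb25).symm, hn15, hn12, hn02⟩
                have hvm : (f u) ∈ ({w, u, (f s2), s1} : Set α) := by rw [← heq]; simp
                simp only [Set.mem_insert_iff, Set.mem_singleton_iff] at hvm
                rcases hvm with h | h | h | h
                exacts [hne16 h.symm, hne06 h.symm, hne56 h.symm, hne26 h.symm]
          ·
            exfalso
            have heq : ({w, u, (f s1), (f u)} : Set α) = ({w, u, (f s2), (f u)} : Set α) :=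
              conflict5 hsp (hne01.symm) (hne14) (hne16) (hne15) (hne04) (hne06) (hne05) (hne46) (hne45) (hne56.symm)
                (by intro x hx; simp only [Set.mem_insert_iff, Set.mem_singleton_iff] at hx ⊢; rcases hx with rfl | rfl | rfl | rfl; exacts [Or.inl rfl, Or.inr (Or.inl rfl), Or.inr (Or.inr (Or.inl rfl)), Or.inr (Or.inr (Or.inr (Or.inl rfl)))])
                (by intro x hx; simp only [Set.mem_insert_iff, Set.mem_singleton_iff] at hx ⊢; rcases hx with rfl | rfl | rfl | rfl; exacts [Or.inl rfl, Or.inr (Or.inl rfl), Or.inr (Or.inr (Or.inr (Or.inr (rfl)))), Or.inr (Or.inr (Or.inr (Or.inl rfl)))])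
                ⟨hne01.symm, hne14, hne16, hne04, hne06, hne46, (hle hb01).symm, (hle hb04), (hle hb46), hn14, hn16, hn06⟩
                ⟨hne01.symm, hne15, hne16, hne05, hne06, hne56, (hle hb01).symm, (hle hb05), (hle hb56), hn15, hn16, hn06⟩
            have hvm : (f s1) ∈ ({w, u, (f s2), (f u)} : Set α) := by rw [← heq]; simp
            simp only [Set.mem_insert_iff, Set.mem_singleton_iff] at hvm
            rcases hvm with h | h | h | h
            exacts [hne14 h.symm, hne04 h.symm, hne45 h, hne46 h]
end
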